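/- arXiv:1203.0044 — 2 statements merged into one kernel-verified Lean document; each statement's English description precedes it below -/
import Mathlib

section
/- Let n ≥ 1 and L, r > 0, and let X_1, …, X_n be independent random variables each uniformly distributed on [0, L]. Form the random graph G(n, L) on vertex set {X_1, …, X_n} with an edge between X_i and X_j (i ≠ j) whenever |X_i − X_j| ≤ r. Then the probability that G(n, L) is connected (i.e., has exactly one connected component) equals ∑_{i=0}^{k_1} (−1)^i · C(n−1, i) · (1 − i r / L)^n, where k_1 = min(n − 1, ⌊L/r⌋) and C(·,·) denotes the binomial coefficient. Equivalently, the probability (with respect to the uniform product measure on [0,L]^n) that every gap between consecutive order statistics of X_1, …, X_n is at most r equals this sum. -/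
open MeasureTheory Set
open scoped Classical ENNReal

namespace ConnProb

variable {n : ℕ}

/-- The event in the theorem statement, via `Tuple.sort`. -/
def sortedGapsLe (r : ℝ) : Set (Fin n → ℝ) :=
  {x | ∀ i j : Fin n, (i : ℕ) + 1 = (j : ℕ) →
      x (Tuple.sort x j) - x (Tuple.sort x i) ≤ r}

/-- A sort-free description of the event. -/
def goodSet (r : ℝ) : Set (Fin n → ℝ) :=
  {x | ∀ i j : Fin n, r < x j - x i → ∃ k, x i < x k ∧ x k - x i ≤ r}

lemma sortedGapsLe_eq_goodSet {r : ℝ} (hr : 0 < r) :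
    (sortedGapsLe r : Set (Fin n → ℝ)) = goodSet r := by
  ext x
  set σ := Tuple.sort x with hσ
  have hg : Monotone (x ∘ σ) := Tuple.monotone_sort x
  constructor
  · intro h i j hij
    have hxij : x i < x j := by linarith
    set b := σ.symm j with hb
    have hgb : x (σ b) = x j := by simp [hb]
    have hne : (Finset.univ.filter (fun c => x (σ c) = x i)).Nonempty := by
      refine ⟨σ.symm i, ?_⟩
      simp
    set a := (Finset.univ.filter (fun c => x (σ c) = x i)).max' hne with ha
    have haF : x (σ a) = x i := by
      have := (Finset.univ.filter (fun c => x (σ c) = x i)).max'_mem hne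
      simpa using this
    have hab : a < b := by
      by_contra hc
      push_neg at hc
      have := hg hc
      simp only [Function.comp_apply] at this
      rw [hgb, haF] at this
      exact absurd this (not_le_of_gt hxij)
    have h1 : (a : ℕ) + 1 < n := lt_of_le_of_lt (Nat.succ_le_of_lt hab) b.isLt
    set a' : Fin n := ⟨(a : ℕ) + 1, h1⟩ with ha'
    have hgap : x (σ a') - x (σ a) ≤ r := h a a' rfl
    have hlt : x (σ a) < x (σ a') := by
      have hle : x (σ a) ≤ x (σ a') := hg (le_of_lt (by exact (Fin.lt_def).2 (by simp [ha'])))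
      rcases lt_or_eq_of_le hle with h' | h'
      · exact h'
      · exfalso
        have hmem : a' ∈ Finset.univ.filter (fun c => x (σ c) = x i) := by
          simp [← h', haF]
        have := Finset.le_max' _ a' hmem
        rw [← ha] at this
        have : (a' : ℕ) ≤ (a : ℕ) := this
        simp [ha'] at this
    exact ⟨σ a', by linarith, by linarith⟩
  · intro h i j hij
    by_contra hgap
    push_neg at hgap
    obtain ⟨k, hk1, hk2⟩ := h (σ i) (σ j) hgap
    set c := σ.symm k with hc
    have hkc : x (σ c) = x k := by simp [hc]
    have hic : i < c := by
      by_contra hle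
      push_neg at hle
      have := hg hle
      simp only [Function.comp_apply] at this
      rw [hkc] at this
      exact absurd hk1 (not_lt_of_ge this)
    have hjc : j ≤ c := by
      have : (j : ℕ) ≤ (c : ℕ) := by
        rw [← hij]; exact Nat.succ_le_of_lt hic
      exact this
    have := hg hjc
    simp only [Function.comp_apply] at this
    rw [hkc] at this
    linarith

/-- On strictly monotone tuples, membership in `goodSet` is just the gap condition. -/
lemma strictMono_mem_goodSet_iff {r : ℝ} (hr : 0 < r) {x : Fin n → ℝ}
    (hx : StrictMono x) :
    x ∈ goodSet r ↔ ∀ i j : Fin n, (i : ℕ) + 1 = (j : ℕ) → x j - x i ≤ r := by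
  constructor
  · intro h i j hij
    by_contra hgap
    push_neg at hgap
    obtain ⟨k, hk1, hk2⟩ := h i j hgap
    have hik : i < k := by
      by_contra hle; push_neg at hle
      exact absurd hk1 (not_lt_of_ge (hx.monotone hle))
    have hjk : j ≤ k := by
      have : (j : ℕ) ≤ (k : ℕ) := by rw [← hij]; exact Nat.succ_le_of_lt hik
      exact this
    have := hx.monotone hjk
    linarith
  · intro h i j hij
    have hxij : x i < x j := by linarith
    have hij' : i < j := by
      by_contra hle; push_neg at hle
      exact absurd hxij (not_lt_of_ge (hx.monotone hle))
    have h1 : (i : ℕ) + 1 < n := lt_of_le_of_lt (Nat.succ_le_of_lt hij') j.isLt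
    refine ⟨⟨(i : ℕ) + 1, h1⟩, hx (by exact (Fin.lt_def).2 (by simp)), h i _ rfl⟩

lemma goodSet_comp_perm {r : ℝ} (σ : Equiv.Perm (Fin n)) (x : Fin n → ℝ) :
    x ∘ σ ∈ goodSet r ↔ x ∈ goodSet r := by
  constructor
  · intro h i j hij
    obtain ⟨k, hk1, hk2⟩ := h (σ.symm i) (σ.symm j) (by simpa using hij)
    exact ⟨σ k, by simpa using hk1, by simpa using hk2⟩
  · intro h i j hij
    obtain ⟨k, hk1, hk2⟩ := h (σ i) (σ j) hij
    exact ⟨σ.symm k, by simpa using hk1, by simpa using hk2⟩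

lemma measurableSet_goodSet {r : ℝ} : MeasurableSet (goodSet r : Set (Fin n → ℝ)) := by
  have : (goodSet r : Set (Fin n → ℝ)) =
      ⋂ i : Fin n, ⋂ j : Fin n,
        ({x : Fin n → ℝ | r < x j - x i}ᶜ ∪
          ⋃ k : Fin n, {x | x i < x k} ∩ {x | x k - x i ≤ r}) := by
    ext x
    simp only [goodSet, mem_setOf_eq, mem_iInter, mem_union, mem_compl_iff, mem_iUnion,
      mem_inter_iff]
    constructor
    · intro h i j
      by_cases hc : r < x j - x i
      · exact Or.inr (h i j hc)
      · exact Or.inl hc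
    · intro h i j hij
      rcases h i j with h' | h'
      · exact absurd hij h'
      · exact h'
  rw [this]
  refine MeasurableSet.iInter fun i => MeasurableSet.iInter fun j => ?_
  refine MeasurableSet.union ?_ (MeasurableSet.iUnion fun k => MeasurableSet.inter ?_ ?_)
  · exact (measurableSet_lt measurable_const
      ((measurable_pi_apply j).sub (measurable_pi_apply i))).compl
  · exact measurableSet_lt (measurable_pi_apply i) (measurable_pi_apply k)
  · exact measurableSet_le ((measurable_pi_apply k).sub (measurable_pi_apply i))
      measurable_const


lemma sortedGapsLe_eq_goodSet' {r : ℝ} (hr : 0 < r) :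
    ({x | ∀ i j : Fin n, (i : ℕ) + 1 = (j : ℕ) →
        x (Tuple.sort x j) - x (Tuple.sort x i) ≤ r} : Set (Fin n → ℝ)) = goodSet r :=
  sortedGapsLe_eq_goodSet hr

/-- Region where `x ∘ σ` is strictly monotone. -/
def C (σ : Equiv.Perm (Fin n)) : Set (Fin n → ℝ) := {x | StrictMono (x ∘ σ)}

lemma measurableSet_C (σ : Equiv.Perm (Fin n)) : MeasurableSet (C σ) := by
  have : C σ = ⋂ (i : Fin n) (j : Fin n) (_ : i < j), {x : Fin n → ℝ | x (σ i) < x (σ j)} := by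
    ext x
    simp only [C, mem_setOf_eq, mem_iInter]
    exact ⟨fun h i j hij => h hij, fun h a b hab => h a b hab⟩
  rw [this]
  exact MeasurableSet.iInter fun i => MeasurableSet.iInter fun j => MeasurableSet.iInter
    fun _ => measurableSet_lt (measurable_pi_apply _) (measurable_pi_apply _)

lemma injective_of_mem_C {σ : Equiv.Perm (Fin n)} {x : Fin n → ℝ} (hx : x ∈ C σ) :
    Function.Injective x := by
  have h1 : Function.Injective (x ∘ σ) := hx.injective
  have : x = (x ∘ σ) ∘ σ.symm := by
    funext i; simp
  rw [this]
  exact h1.comp σ.symm.injective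

lemma C_pairwise_disjoint : Pairwise fun σ τ : Equiv.Perm (Fin n) => Disjoint (C σ) (C τ) := by
  intro σ τ hστ
  rw [Set.disjoint_left]
  intro x hxσ hxτ
  have hinj : Function.Injective x := injective_of_mem_C hxσ
  have h1 : x ∘ σ = x ∘ Tuple.sort x := (Tuple.comp_sort_eq_comp_iff_monotone).2 hxσ.monotone
  have h2 : x ∘ τ = x ∘ Tuple.sort x := (Tuple.comp_sort_eq_comp_iff_monotone).2 hxτ.monotone
  apply hστ
  apply Equiv.ext
  intro i
  apply hinj
  have := congrFun (h1.trans h2.symm) i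
  exact this

lemma mem_C_sort {x : Fin n → ℝ} (hx : Function.Injective x) : x ∈ C (Tuple.sort x) := by
  have hmono : Monotone (x ∘ Tuple.sort x) := Tuple.monotone_sort x
  have hinj : Function.Injective (x ∘ Tuple.sort x) := hx.comp (Equiv.injective _)
  exact hmono.strictMono_of_injective hinj

/-- The set of non-injective tuples is Lebesgue-null. -/
lemma volume_not_injective :
    (volume : Measure (Fin n → ℝ)) {x | ¬ Function.Injective x} = 0 := by
  have hsub : {x : Fin n → ℝ | ¬ Function.Injective x} ⊆
      ⋃ (i : Fin n) (j : Fin n) (_ : i ≠ j), {x | x i = x j} := by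
    intro x hx
    simp only [Function.Injective, not_forall] at hx
    obtain ⟨i, j, hxij, hij⟩ := hx
    simp only [mem_iUnion]
    exact ⟨i, j, hij, hxij⟩
  refine measure_mono_null hsub ?_
  refine measure_iUnion_null fun i => measure_iUnion_null fun j => measure_iUnion_null fun hij => ?_
  -- use the splitting equivalence
  set p : Fin n → Prop := fun k => k = i with hp
  have hji : ¬ p j := hij ∘ Eq.symm ∘ (hp ▸ id)
  set e := MeasurableEquiv.piEquivPiSubtypeProd (fun _ : Fin n => ℝ) p with he
  have hmp := volume_preserving_piEquivPiSubtypeProd (fun _ : Fin n => ℝ) p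
  set S' : Set ((∀ _ : Subtype p, ℝ) × (∀ _ : {k // ¬ p k}, ℝ)) :=
    {y | y.2 ⟨j, hji⟩ = y.1 ⟨i, rfl⟩} with hS'
  have hS'm : MeasurableSet S' := by
    apply measurableSet_eq_fun
    · exact (measurable_pi_apply _).comp measurable_snd
    · exact (measurable_pi_apply _).comp measurable_fst
  have hpre : {x : Fin n → ℝ | x i = x j} = e ⁻¹' S' := by
    ext x
    simp only [hS', he, mem_setOf_eq, mem_preimage, MeasurableEquiv.piEquivPiSubtypeProd,
      MeasurableEquiv.coe_mk, Equiv.piEquivPiSubtypeProd_apply]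
    exact eq_comm
  rw [hpre, hmp.measure_preimage hS'm.nullMeasurableSet]
  -- now a Fubini argument
  rw [Measure.volume_eq_prod]
  rw [Measure.prod_apply hS'm]
  have : ∀ a : (∀ _ : Subtype p, ℝ),
      (volume : Measure (∀ _ : {k // ¬ p k}, ℝ)) (Prod.mk a ⁻¹' S') = 0 := by
    intro a
    have : Prod.mk a ⁻¹' S' = {z : ∀ _ : {k // ¬ p k}, ℝ | z ⟨j, hji⟩ = a ⟨i, rfl⟩} := rfl
    rw [this]
    have := Measure.pi_hyperplane (fun _ : {k // ¬ p k} => (volume : Measure ℝ))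
      ⟨j, hji⟩ (a ⟨i, rfl⟩)
    simpa [volume_pi] using this
  simp only [this]
  simp

/-- Precomposition with a permutation is measure preserving. -/
lemma measurePreserving_compPerm (σ : Equiv.Perm (Fin n)) :
    MeasurePreserving (fun x : Fin n → ℝ => x ∘ σ) volume volume := by
  have hmeas : Measurable (fun x : Fin n → ℝ => x ∘ σ) :=
    measurable_pi_lambda _ fun i => measurable_pi_apply (σ i)
  refine ⟨hmeas, ?_⟩
  rw [show (volume : Measure (Fin n → ℝ)) = Measure.pi fun _ => volume from rfl]
  refine (Measure.pi_eq fun s hs => ?_).symm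
  rw [Measure.map_apply hmeas (MeasurableSet.univ_pi hs)]
  have : (fun x : Fin n → ℝ => x ∘ σ) ⁻¹' (univ.pi s) = univ.pi fun j => s (σ.symm j) := by
    ext x
    simp only [mem_preimage, mem_univ_pi, Function.comp_apply]
    constructor
    · intro h j
      have := h (σ.symm j)
      simpa using this
    · intro h i
      have := h (σ i)
      simpa using this
  rw [this, Measure.pi_pi]
  exact Equiv.prod_comp σ.symm fun i => volume (s i)


/-- Symmetrization: an exchangeable measurable set decomposes into `n!` copies of its
strictly sorted part. -/
lemma volume_eq_factorial_mul {B : Set (Fin n → ℝ)} (hB : MeasurableSet B)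
    (hinv : ∀ (σ : Equiv.Perm (Fin n)) (x : Fin n → ℝ), x ∘ σ ∈ B ↔ x ∈ B) :
    volume B = (n.factorial : ℝ≥0∞) * volume (B ∩ C 1) := by
  have hUm : ∀ σ : Equiv.Perm (Fin n), MeasurableSet (B ∩ C σ) :=
    fun σ => hB.inter (measurableSet_C σ)
  have hBU : volume B = volume (⋃ σ : Equiv.Perm (Fin n), B ∩ C σ) := by
    apply le_antisymm
    · calc volume B ≤ volume ((⋃ σ : Equiv.Perm (Fin n), B ∩ C σ) ∪
          {x | ¬ Function.Injective x}) := by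
            apply measure_mono
            intro x hx
            by_cases hinj : Function.Injective x
            · exact Or.inl (mem_iUnion.2 ⟨Tuple.sort x, hx, mem_C_sort hinj⟩)
            · exact Or.inr hinj
        _ ≤ volume (⋃ σ : Equiv.Perm (Fin n), B ∩ C σ) +
            volume {x : Fin n → ℝ | ¬ Function.Injective x} := measure_union_le _ _
        _ = volume (⋃ σ : Equiv.Perm (Fin n), B ∩ C σ) := by
            rw [volume_not_injective, add_zero]
    · exact measure_mono (iUnion_subset fun σ => inter_subset_left)
  have hdisj : Pairwise (Function.onFun Disjoint fun σ : Equiv.Perm (Fin n) => B ∩ C σ) :=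
    fun σ τ hστ => ((C_pairwise_disjoint hστ).mono inter_subset_right inter_subset_right)
  rw [hBU, measure_iUnion hdisj hUm, tsum_fintype]
  have hall : ∀ σ : Equiv.Perm (Fin n), volume (B ∩ C σ) = volume (B ∩ C 1) := by
    intro σ
    have hpre : (fun x : Fin n → ℝ => x ∘ σ) ⁻¹' (B ∩ C 1) = B ∩ C σ := by
      ext x
      simp only [mem_preimage, mem_inter_iff, hinv σ x, C, mem_setOf_eq]
      constructor
      · rintro ⟨h1, h2⟩
        refine ⟨h1, ?_⟩
        simpa [Function.comp] using h2
      · rintro ⟨h1, h2⟩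
        refine ⟨h1, ?_⟩
        simpa [Function.comp] using h2
    rw [← hpre, (measurePreserving_compPerm σ).measure_preimage
      ((hB.inter (measurableSet_C 1)).nullMeasurableSet)]
  simp only [hall, Finset.sum_const, Finset.card_univ, nsmul_eq_mul]
  congr 1
  simp [Fintype.card_perm, Fintype.card_fin]

/-- Volume of an ordered box (simplex). -/
lemma factorial_mul_volume_simplex (c : ℝ) :
    (n.factorial : ℝ≥0∞) * volume (univ.pi (fun _ : Fin n => Icc (0:ℝ) c) ∩ C 1)
      = (ENNReal.ofReal c) ^ n := by
  have hbox : MeasurableSet (univ.pi fun _ : Fin n => Icc (0:ℝ) c) :=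
    MeasurableSet.univ_pi fun _ => measurableSet_Icc
  have hinv : ∀ (σ : Equiv.Perm (Fin n)) (x : Fin n → ℝ),
      x ∘ σ ∈ (univ.pi fun _ : Fin n => Icc (0:ℝ) c) ↔
        x ∈ (univ.pi fun _ : Fin n => Icc (0:ℝ) c) := by
    intro σ x
    simp only [mem_univ_pi, Function.comp_apply]
    exact ⟨fun h i => by simpa using h (σ.symm i), fun h i => h (σ i)⟩
  rw [← volume_eq_factorial_mul hbox hinv, volume_pi_pi]
  simp [Real.volume_Icc]


/-- Inclusion–exclusion for measures. -/
lemma inclusion_exclusion_measure {α ι : Type*} [MeasurableSpace α] (μ : Measure α)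
    (E : ι → Set α) (hE : ∀ i, MeasurableSet (E i)) (u : Finset ι) :
    ∀ B : Set α, MeasurableSet B → μ B ≠ ∞ →
    (μ (B ∩ ⋂ i ∈ u, (E i)ᶜ)).toReal
      = ∑ S ∈ u.powerset, (-1 : ℝ) ^ S.card * (μ (B ∩ ⋂ i ∈ S, E i)).toReal := by
  induction u using Finset.induction with
  | empty =>
      intro B hB hBfin
      simp
  | @insert a u ha ih =>
      intro B hB hBfin
      have key : ∀ (X : Set α), MeasurableSet X →
          (μ (B ∩ (E a)ᶜ ∩ X)).toReal = (μ (B ∩ X)).toReal - (μ (B ∩ (E a ∩ X))).toReal := by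
        intro X hX
        have hsplit : B ∩ X = (B ∩ (E a)ᶜ ∩ X) ∪ (B ∩ (E a ∩ X)) := by
          ext x
          simp only [mem_inter_iff, mem_union, mem_compl_iff]
          tauto
        have hdisj : Disjoint (B ∩ (E a)ᶜ ∩ X) (B ∩ (E a ∩ X)) := by
          rw [Set.disjoint_left]
          rintro x ⟨⟨-, hx2⟩, -⟩ ⟨-, hx3, -⟩
          exact hx2 hx3
        have hm1 : MeasurableSet (B ∩ (E a ∩ X)) := hB.inter ((hE a).inter hX)
        have : μ (B ∩ X) = μ (B ∩ (E a)ᶜ ∩ X) + μ (B ∩ (E a ∩ X)) := by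
          rw [hsplit, measure_union hdisj hm1]
        have hf1 : μ (B ∩ (E a)ᶜ ∩ X) ≠ ∞ :=
          fun h => hBfin (eq_top_iff.2 (h ▸ measure_mono (fun x hx => hx.1.1)))
        have hf2 : μ (B ∩ (E a ∩ X)) ≠ ∞ :=
          fun h => hBfin (eq_top_iff.2 (h ▸ measure_mono (fun x hx => hx.1)))
        rw [this, ENNReal.toReal_add hf1 hf2]
        ring
      have hBa : MeasurableSet (B ∩ (E a)ᶜ) := hB.inter (hE a).compl
      have hBafin : μ (B ∩ (E a)ᶜ) ≠ ∞ :=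
        fun h => hBfin (eq_top_iff.2 (h ▸ measure_mono inter_subset_left))
      have step1 : B ∩ ⋂ i ∈ insert a u, (E i)ᶜ = (B ∩ (E a)ᶜ) ∩ ⋂ i ∈ u, (E i)ᶜ := by
        rw [Finset.set_biInter_insert]
        ext x; simp only [mem_inter_iff, mem_iInter]; tauto
      rw [step1, ih _ hBa hBafin, Finset.sum_powerset_insert ha]
      have hXm : ∀ S : Finset ι, MeasurableSet (⋂ i ∈ S, E i) :=
        fun S => MeasurableSet.biInter S.countable_toSet fun i _ => hE i
      have t1 : ∀ S ∈ u.powerset,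
          (-1:ℝ) ^ S.card * (μ (B ∩ (E a)ᶜ ∩ ⋂ i ∈ S, E i)).toReal
            = (-1:ℝ) ^ S.card * (μ (B ∩ ⋂ i ∈ S, E i)).toReal
              + (-1:ℝ) ^ (insert a S).card * (μ (B ∩ ⋂ i ∈ insert a S, E i)).toReal := by
        intro S hS
        have haS : a ∉ S := fun h => ha (Finset.mem_powerset.1 hS h)
        rw [key _ (hXm S), Finset.card_insert_of_notMem haS]
        have : B ∩ ⋂ i ∈ insert a S, E i = B ∩ (E a ∩ ⋂ i ∈ S, E i) := by
          rw [Finset.set_biInter_insert]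
        rw [this]
        ring
      rw [Finset.sum_congr rfl t1, Finset.sum_add_distrib]


def succ' (i : Fin n) : Fin n := if h : (i : ℕ) + 1 < n then ⟨(i : ℕ) + 1, h⟩ else i

def Egap (r : ℝ) (i : Fin n) : Set (Fin n → ℝ) := {x | r < x (succ' i) - x i}

lemma measurableSet_Egap (r : ℝ) (i : Fin n) : MeasurableSet (Egap r i) :=
  measurableSet_lt measurable_const
    ((measurable_pi_apply (succ' i)).sub (measurable_pi_apply i))

lemma succ'_of_lt {i : Fin n} (h : (i : ℕ) + 1 < n) : succ' i = ⟨(i : ℕ) + 1, h⟩ :=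
  dif_pos h

lemma succ'_of_ge {i : Fin n} (h : ¬ (i : ℕ) + 1 < n) : succ' i = i := dif_neg h

lemma lt_succ' {i : Fin n} (h : (i : ℕ) + 1 < n) : i < succ' i := by
  rw [succ'_of_lt h]; exact Fin.lt_def.2 (by simp)

lemma Egap_empty {r : ℝ} (hr : 0 < r) {i : Fin n} (h : ¬ (i : ℕ) + 1 < n) :
    Egap r i = (∅ : Set (Fin n → ℝ)) := by
  ext x
  simp [Egap, succ'_of_ge h]
  linarith

lemma strictMono_of_consec {x : Fin n → ℝ}
    (h : ∀ i : Fin n, (i : ℕ) + 1 < n → x i < x (succ' i)) : StrictMono x := by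
  cases n with
  | zero => exact fun a => a.elim0
  | succ m =>
      rw [Fin.strictMono_iff_lt_succ]
      intro i
      have h1 : ((i.castSucc : Fin (m+1)) : ℕ) + 1 < m + 1 := by
        simp only [Fin.coe_castSucc]
        omega
      have := h i.castSucc h1
      rwa [succ'_of_lt h1, show (⟨((i.castSucc : Fin (m+1)) : ℕ) + 1, h1⟩ : Fin (m+1)) = i.succ
        from Fin.ext (by simp)] at this

/-- The shift vector associated to a set of "large gap" positions. -/
noncomputable def shiftVec (r : ℝ) (S : Finset (Fin n)) : Fin n → ℝ :=
  fun i => r * ((S.filter (· < i)).card : ℝ)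

lemma shiftVec_nonneg {r : ℝ} (hr : 0 < r) (S : Finset (Fin n)) (i : Fin n) :
    0 ≤ shiftVec r S i :=
  mul_nonneg hr.le (Nat.cast_nonneg _)

lemma shiftVec_mono {r : ℝ} (hr : 0 < r) (S : Finset (Fin n)) {a b : Fin n} (hab : a ≤ b) :
    shiftVec r S a ≤ shiftVec r S b := by
  apply mul_le_mul_of_nonneg_left _ hr.le
  have hsub : S.filter (· < a) ⊆ S.filter (· < b) :=
    Finset.monotone_filter_right S (fun m _ hm => lt_of_lt_of_le hm hab)
  exact_mod_cast Finset.card_le_card hsub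

lemma shiftVec_le {r : ℝ} (hr : 0 < r) (S : Finset (Fin n)) (i : Fin n) :
    shiftVec r S i ≤ r * S.card := by
  apply mul_le_mul_of_nonneg_left _ hr.le
  exact_mod_cast Finset.card_le_card (Finset.filter_subset _ _)

lemma shiftVec_zero {r : ℝ} (S : Finset (Fin n)) (i0 : Fin n) (h0 : (i0 : ℕ) = 0) :
    shiftVec r S i0 = 0 := by
  have : S.filter (· < i0) = ∅ := by
    apply Finset.filter_false_of_mem
    intro m hm hlt
    have := Fin.lt_def.1 hlt
    omega
  simp [shiftVec, this]

lemma shiftVec_succ'_mem {r : ℝ} {S : Finset (Fin n)} {m : Fin n} (hm : m ∈ S)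
    (h : (m : ℕ) + 1 < n) :
    shiftVec r S (succ' m) = shiftVec r S m + r := by
  have hfil : S.filter (· < succ' m) = insert m (S.filter (· < m)) := by
    ext s
    simp only [Finset.mem_filter, Finset.mem_insert]
    constructor
    · rintro ⟨hs, hlt⟩
      have := Fin.lt_def.1 hlt
      rw [succ'_of_lt h] at this
      simp only at this
      rcases Nat.lt_succ_iff_lt_or_eq.1 this with h' | h'
      · exact Or.inr ⟨hs, Fin.lt_def.2 h'⟩
      · exact Or.inl (Fin.ext h')
    · rintro (rfl | ⟨hs, hlt⟩)
      · exact ⟨hm, lt_succ' h⟩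
      · exact ⟨hs, lt_trans hlt (lt_succ' h)⟩
  have hnotmem : m ∉ S.filter (· < m) := by simp
  rw [shiftVec, shiftVec, hfil, Finset.card_insert_of_notMem hnotmem]
  push_cast
  ring

lemma shiftVec_succ'_not_mem {r : ℝ} {S : Finset (Fin n)} {i : Fin n} (hi : i ∉ S)
    (h : (i : ℕ) + 1 < n) :
    shiftVec r S (succ' i) = shiftVec r S i := by
  have hfil : S.filter (· < succ' i) = S.filter (· < i) := by
    ext s
    simp only [Finset.mem_filter]
    constructor
    · rintro ⟨hs, hlt⟩
      have hv := Fin.lt_def.1 hlt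
      rw [succ'_of_lt h] at hv
      simp only at hv
      rcases Nat.lt_succ_iff_lt_or_eq.1 hv with h' | h'
      · exact ⟨hs, Fin.lt_def.2 h'⟩
      · exact absurd (Fin.ext h' ▸ hs) hi
    · rintro ⟨hs, hlt⟩
      exact ⟨hs, lt_trans hlt (lt_succ' h)⟩
  rw [shiftVec, shiftVec, hfil]

lemma shiftVec_last {r : ℝ} {S : Finset (Fin n)} (hS : ∀ m ∈ S, (m : ℕ) + 1 < n)
    (lastI : Fin n) (hlast : (lastI : ℕ) = n - 1) :
    shiftVec r S lastI = r * S.card := by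
  have hfil : S.filter (· < lastI) = S := by
    apply Finset.filter_true_of_mem
    intro m hm
    have := hS m hm
    exact Fin.lt_def.2 (by omega)
  rw [shiftVec, hfil]

/-- Key translation identity: shifting closes the prescribed large gaps. -/
lemma shift_preimage (L : ℝ) {r : ℝ} (hr : 0 < r) (hn : 1 ≤ n) (S : Finset (Fin n))
    (hS : ∀ m ∈ S, (m : ℕ) + 1 < n) :
    (fun y : Fin n → ℝ => y + shiftVec r S) ⁻¹'
        (univ.pi (fun _ => Icc (0:ℝ) L) ∩ C 1 ∩ ⋂ m ∈ S, Egap r m)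
      = univ.pi (fun _ => Icc (0:ℝ) (L - S.card * r)) ∩ C 1 := by
  have hzero : (0 : ℕ) < n := hn
  set i0 : Fin n := ⟨0, hzero⟩ with hi0
  set lastI : Fin n := ⟨n - 1, by omega⟩ with hlastI
  have hC1 : ∀ x : Fin n → ℝ, x ∈ C 1 ↔ StrictMono x := by
    intro x
    simp only [C, mem_setOf_eq, Equiv.Perm.coe_one, Function.comp_id]
  ext y
  simp only [mem_preimage, mem_inter_iff, mem_iInter, mem_univ_pi, mem_Icc, Pi.add_apply,
    hC1, Egap, mem_setOf_eq]
  constructor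
  · rintro ⟨⟨hbox, hmono⟩, hgaps⟩
    have hmono' : StrictMono (fun i => y i + shiftVec r S i) := hmono
    have hconsec : ∀ i : Fin n, (i : ℕ) + 1 < n → y i < y (succ' i) := by
      intro i hi
      by_cases hiS : i ∈ S
      · have := hgaps i hiS
        rw [shiftVec_succ'_mem hiS hi] at this
        linarith
      · have h1 : i < succ' i := lt_succ' hi
        have := hmono' h1
        simp only at this
        rw [shiftVec_succ'_not_mem hiS hi] at this
        linarith
    have hymono : StrictMono y := strictMono_of_consec hconsec
    have hy0 : 0 ≤ y i0 := by
      have := (hbox i0).1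
      rw [shiftVec_zero S i0 rfl] at this
      linarith
    have hylast : y lastI ≤ L - S.card * r := by
      have := (hbox lastI).2
      rw [shiftVec_last hS lastI rfl] at this
      linarith
    refine ⟨fun i => ⟨?_, ?_⟩, hymono⟩
    · refine le_trans hy0 (hymono.monotone (Fin.le_def.2 ?_))
      simpa [hi0] using Nat.zero_le (i : ℕ)
    · refine le_trans (hymono.monotone (Fin.le_def.2 ?_)) hylast
      have hi := i.isLt
      simp only [hlastI]
      omega
  · rintro ⟨hbox, hymono⟩
    have hmono' : StrictMono (fun i => y i + shiftVec r S i) := by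
      intro a b hab
      have h1 : y a < y b := hymono hab
      have h2 : shiftVec r S a ≤ shiftVec r S b := shiftVec_mono hr S hab.le
      simp only
      linarith
    refine ⟨⟨fun i => ⟨?_, ?_⟩, hmono'⟩, ?_⟩
    · have := (hbox i).1
      have := shiftVec_nonneg hr S i
      linarith
    · have h1 := (hbox i).2
      have h2 := shiftVec_le hr S i
      linarith
    · intro m hm
      have h1 : (m : ℕ) + 1 < n := hS m hm
      have h2 : y m < y (succ' m) := hymono (lt_succ' h1)
      rw [shiftVec_succ'_mem hm h1]
      linarith

lemma volume_D (L : ℝ) {r : ℝ} (hr : 0 < r) (hn : 1 ≤ n) (S : Finset (Fin n))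
    (hS : ∀ m ∈ S, (m : ℕ) + 1 < n) :
    volume (univ.pi (fun _ : Fin n => Icc (0:ℝ) L) ∩ C 1 ∩ ⋂ m ∈ S, Egap r m)
      = volume (univ.pi (fun _ : Fin n => Icc (0:ℝ) (L - S.card * r)) ∩ C 1) := by
  rw [← shift_preimage L hr hn S hS]
  have : (fun y : Fin n → ℝ => y + shiftVec r S) = (fun y => shiftVec r S + y) := by
    funext y; exact add_comm _ _
  rw [this]
  exact (measure_preimage_add volume _ _).symm


/-- The main volume computation. -/
lemma main_vol (hn : 1 ≤ n) {L r : ℝ} (hL : 0 < L) (hr : 0 < r) :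
    (volume (goodSet r ∩ univ.pi (fun _ : Fin n => Icc (0:ℝ) L))).toReal
      = ∑ k ∈ Finset.range n, (-1:ℝ) ^ k * ((n-1).choose k : ℝ) *
          (if (k:ℝ) * r ≤ L then (L - k*r)^n else 0) := by
  classical
  set box := univ.pi (fun _ : Fin n => Icc (0:ℝ) L) with hbox_def
  have hboxm : MeasurableSet box := MeasurableSet.univ_pi fun _ => measurableSet_Icc
  have hboxvol : volume box = (ENNReal.ofReal L) ^ n := by
    rw [hbox_def, volume_pi_pi]
    simp [Real.volume_Icc]
  have hboxfin : volume box ≠ ∞ := by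
    rw [hboxvol]; exact ENNReal.pow_ne_top ENNReal.ofReal_ne_top
  have hC1 : ∀ x : Fin n → ℝ, x ∈ C 1 ↔ StrictMono x := by
    intro x; simp only [C, mem_setOf_eq, Equiv.Perm.coe_one, Function.comp_id]
  have hGm : MeasurableSet (goodSet r : Set (Fin n → ℝ)) := measurableSet_goodSet
  have hinv : ∀ (σ : Equiv.Perm (Fin n)) (x : Fin n → ℝ),
      x ∘ σ ∈ goodSet r ∩ box ↔ x ∈ goodSet r ∩ box := by
    intro σ x
    rw [mem_inter_iff, mem_inter_iff, goodSet_comp_perm]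
    have : x ∘ σ ∈ box ↔ x ∈ box := by
      simp only [hbox_def, mem_univ_pi, Function.comp_apply]
      exact ⟨fun h i => by simpa using h (σ.symm i), fun h i => h (σ i)⟩
    rw [this]
  have step1 : volume (goodSet r ∩ box)
      = (n.factorial : ℝ≥0∞) * volume (goodSet r ∩ box ∩ C 1) :=
    volume_eq_factorial_mul (hGm.inter hboxm) hinv
  set lastI : Fin n := ⟨n - 1, by omega⟩ with hlastI
  set u : Finset (Fin n) := Finset.univ.erase lastI with hu
  have hmemu : ∀ i : Fin n, i ∈ u ↔ (i : ℕ) + 1 < n := by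
    intro i
    rw [hu, Finset.mem_erase]
    have hi := i.isLt
    constructor
    · rintro ⟨hne, -⟩
      rcases Nat.lt_or_ge ((i : ℕ) + 1) n with h | h
      · exact h
      · exact absurd (Fin.ext (show (i : ℕ) = n - 1 by omega)) hne
    · intro h
      refine ⟨fun he => ?_, Finset.mem_univ i⟩
      rw [he] at h
      have h2 : n - 1 + 1 < n := h
      omega
  have step2 : goodSet r ∩ box ∩ C 1 = (box ∩ C 1) ∩ ⋂ i ∈ u, (Egap r i)ᶜ := by
    ext x
    simp only [mem_inter_iff, mem_iInter, mem_compl_iff, Egap, mem_setOf_eq]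
    constructor
    · rintro ⟨⟨hg, hb⟩, hc⟩
      refine ⟨⟨hb, hc⟩, fun i hiu => ?_⟩
      have h1 : (i : ℕ) + 1 < n := (hmemu i).1 hiu
      have := ((strictMono_mem_goodSet_iff hr ((hC1 x).1 hc)).1 hg) i (succ' i)
        (by rw [succ'_of_lt h1])
      linarith
    · rintro ⟨⟨hb, hc⟩, hgaps⟩
      refine ⟨⟨?_, hb⟩, hc⟩
      rw [strictMono_mem_goodSet_iff hr ((hC1 x).1 hc)]
      intro i j hij
      have h1 : (i : ℕ) + 1 < n := by rw [hij]; exact j.isLt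
      have hiu : i ∈ u := (hmemu i).2 h1
      have hsucc : succ' i = j := by
        rw [succ'_of_lt h1]
        exact Fin.ext (by simpa using hij)
      have := hgaps i hiu
      rw [hsucc] at this
      linarith
  have hBCfin : volume (box ∩ C 1) ≠ ∞ :=
    fun h => hboxfin (top_le_iff.1 (h ▸ measure_mono inter_subset_left))
  have step3 := inclusion_exclusion_measure volume (Egap r) (measurableSet_Egap r) u
    (box ∩ C 1) (hboxm.inter (measurableSet_C 1)) hBCfin
  -- each term
  set V : ℕ → ℝ≥0∞ := fun k =>
    volume (univ.pi (fun _ : Fin n => Icc (0:ℝ) (L - k * r)) ∩ C 1) with hV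
  have step4 : ∀ S ∈ u.powerset,
      (-1:ℝ) ^ S.card * (volume ((box ∩ C 1) ∩ ⋂ i ∈ S, Egap r i)).toReal
        = (-1:ℝ) ^ S.card * (V S.card).toReal := by
    intro S hS
    have hSsub := Finset.mem_powerset.1 hS
    have hSc : ∀ m ∈ S, (m : ℕ) + 1 < n := fun m hm => (hmemu m).1 (hSsub hm)
    congr 1
    rw [show (box ∩ C 1) ∩ ⋂ i ∈ S, Egap r i = box ∩ C 1 ∩ ⋂ m ∈ S, Egap r m from rfl]
    rw [hbox_def, volume_D L hr hn S hSc, hV]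
  have step5 : ∀ k : ℕ, (n.factorial : ℝ) * (V k).toReal
      = (if (k:ℝ) * r ≤ L then (L - k*r)^n else 0) := by
    intro k
    have h := factorial_mul_volume_simplex (n := n) (L - k * r)
    have h2 := congrArg ENNReal.toReal h
    rw [ENNReal.toReal_mul, ENNReal.toReal_pow, ENNReal.toReal_natCast] at h2
    have h3 : (n.factorial : ℝ) * (V k).toReal
        = (ENNReal.ofReal (L - k*r)).toReal ^ n := h2
    by_cases hkr : (k:ℝ) * r ≤ L
    · rw [if_pos hkr]
      rw [ENNReal.toReal_ofReal (by linarith)] at h3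
      exact h3
    · rw [if_neg hkr]
      rw [show ENNReal.ofReal (L - (k:ℝ)*r) = 0 from ENNReal.ofReal_eq_zero.2 (by linarith)]
        at h3
      simpa [zero_pow (show n ≠ 0 by omega)] using h3
  have hVfin : ∀ k, V k ≠ ∞ := by
    intro k
    have := factorial_mul_volume_simplex (n := n) (L - k * r)
    intro hcon
    have hcon' : volume ((univ.pi fun _ : Fin n => Icc (0:ℝ) (L - k * r)) ∩ C 1) = ⊤ := hcon
    rw [hcon', ENNReal.mul_top (by exact_mod_cast Nat.factorial_ne_zero n)] at this
    exact ENNReal.pow_ne_top ENNReal.ofReal_ne_top this.symm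
  have hucard : u.card = n - 1 := by
    rw [hu, Finset.card_erase_of_mem (Finset.mem_univ _), Finset.card_univ, Fintype.card_fin]
  -- put everything together
  rw [step1, ENNReal.toReal_mul, ENNReal.toReal_natCast, step2, step3,
    Finset.sum_congr rfl step4]
  rw [show (∑ S ∈ u.powerset, (-1:ℝ) ^ S.card * (V S.card).toReal)
      = ∑ S ∈ u.powerset, (fun m => (-1:ℝ) ^ m * (V m).toReal) S.card from rfl]
  rw [Finset.sum_powerset_apply_card (fun m => (-1:ℝ) ^ m * (V m).toReal)]
  rw [hucard, Finset.mul_sum]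
  rw [show n - 1 + 1 = n from by omega]
  refine Finset.sum_congr rfl fun k _ => ?_
  rw [← step5 k]
  simp only [nsmul_eq_mul]
  ring


lemma measure_apply_final {L : ℝ} (hL : 0 < L) {S : Set (Fin n → ℝ)}
    (hS : MeasurableSet S) :
    (Measure.pi fun _ : Fin n => (ENNReal.ofReal L)⁻¹ • volume.restrict (Icc (0:ℝ) L)) S
      = (ENNReal.ofReal L)⁻¹ ^ n
          * volume (S ∩ univ.pi fun _ : Fin n => Icc (0:ℝ) L) := by
  have hLtop : (ENNReal.ofReal L)⁻¹ ≠ ∞ :=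
    ENNReal.inv_ne_top.2 (by simp [ENNReal.ofReal_eq_zero]; linarith)
  haveI : IsFiniteMeasure ((ENNReal.ofReal L)⁻¹ • volume.restrict (Icc (0:ℝ) L)) := by
    constructor
    rw [Measure.smul_apply, Measure.restrict_apply MeasurableSet.univ, univ_inter,
      Real.volume_Icc, smul_eq_mul]
    exact ENNReal.mul_lt_top hLtop.lt_top ENNReal.ofReal_lt_top
  have hpi : (Measure.pi fun _ : Fin n => (ENNReal.ofReal L)⁻¹ • volume.restrict (Icc (0:ℝ) L))
      = ((ENNReal.ofReal L)⁻¹ ^ n) •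
          ((volume : Measure (Fin n → ℝ)).restrict (univ.pi fun _ => Icc (0:ℝ) L)) := by
    refine Measure.pi_eq fun s hs => ?_
    have hterm : ∀ i : Fin n,
        ((ENNReal.ofReal L)⁻¹ • volume.restrict (Icc (0:ℝ) L)) (s i)
          = (ENNReal.ofReal L)⁻¹ * volume (s i ∩ Icc (0:ℝ) L) := by
      intro i
      rw [Measure.smul_apply, Measure.restrict_apply (hs i), smul_eq_mul]
    rw [Finset.prod_congr rfl (fun i _ => hterm i), Finset.prod_mul_distrib,
      Finset.prod_const, Finset.card_univ, Fintype.card_fin]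
    rw [Measure.smul_apply, Measure.restrict_apply (MeasurableSet.univ_pi hs), smul_eq_mul]
    rw [← Set.pi_inter_distrib, volume_pi_pi]
  rw [hpi, Measure.smul_apply, Measure.restrict_apply hS, smul_eq_mul]

end ConnProb

/-- For `n ≥ 1`, `L, r > 0` and `X_1, …, X_n` i.i.d. uniform on `[0, L]`,
the probability that the random geometric graph `G(n, L)` (edge iff distance `≤ r`) is
connected — equivalently, that every gap between consecutive order statistics of the
sample is at most `r` — equals `∑_{i=0}^{k₁} (-1)^i C(n-1, i) (1 - i r / L)^n`
with `k₁ = min (n-1) ⌊L/r⌋`. -/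
theorem connectivity_prob_one_dim (n : ℕ) (hn : 1 ≤ n) (L r : ℝ)
    (hL : 0 < L) (hr : 0 < r) :
    ((Measure.pi fun _ : Fin n =>
        (ENNReal.ofReal L)⁻¹ • volume.restrict (Set.Icc (0 : ℝ) L))
      {x : Fin n → ℝ | ∀ i j : Fin n, (i : ℕ) + 1 = (j : ℕ) →
          x (Tuple.sort x j) - x (Tuple.sort x i) ≤ r}).toReal
      = ∑ i ∈ Finset.range (min (n - 1) ⌊L / r⌋₊ + 1),
          (-1 : ℝ) ^ i * ((n - 1).choose i : ℝ) * (1 - (i : ℝ) * r / L) ^ n := by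
  classical
  rw [ConnProb.sortedGapsLe_eq_goodSet' hr,
    ConnProb.measure_apply_final hL ConnProb.measurableSet_goodSet,
    ENNReal.toReal_mul, ENNReal.toReal_pow, ENNReal.toReal_inv,
    ENNReal.toReal_ofReal hL.le, ConnProb.main_vol hn hL hr]
  have hL0 : L ≠ 0 := ne_of_gt hL
  have hdivpos : 0 ≤ L / r := le_of_lt (div_pos hL hr)
  have hminle : min (n - 1) ⌊L / r⌋₊ + 1 ≤ n := by
    have : min (n - 1) ⌊L / r⌋₊ ≤ n - 1 := min_le_left _ _
    omega
  have key : ∀ k ∈ Finset.range n,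
      (L⁻¹) ^ n * ((-1:ℝ) ^ k * ((n-1).choose k : ℝ) *
          (if (k:ℝ) * r ≤ L then (L - k*r)^n else 0))
        = if k ∈ Finset.range (min (n - 1) ⌊L / r⌋₊ + 1) then
            (-1:ℝ) ^ k * ((n-1).choose k : ℝ) * (1 - (k:ℝ) * r / L) ^ n else 0 := by
    intro k hk
    have hkn : k < n := Finset.mem_range.1 hk
    by_cases hks : k ∈ Finset.range (min (n - 1) ⌊L / r⌋₊ + 1)
    · have hkfl : k ≤ ⌊L / r⌋₊ := by
        have := Finset.mem_range.1 hks
        omega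
      have hkr : (k:ℝ) * r ≤ L := by
        have h1 : (k:ℝ) ≤ L / r := (Nat.le_floor_iff hdivpos).1 hkfl
        calc (k:ℝ) * r ≤ (L / r) * r := by nlinarith
          _ = L := by field_simp
      rw [if_pos hks, if_pos hkr]
      have hfrac : (1 - (k:ℝ) * r / L) = (L - (k:ℝ)*r) * L⁻¹ := by
        field_simp
      rw [hfrac, mul_pow]
      ring
    · have hkfl : ⌊L / r⌋₊ < k := by
        have := Finset.mem_range.not.1 hks
        omega
      have hkr : ¬ ((k:ℝ) * r ≤ L) := by
        intro hcon
        have h1 : (k:ℝ) ≤ L / r := by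
          rw [le_div_iff₀ hr]; exact hcon
        exact absurd ((Nat.le_floor_iff hdivpos).2 h1) (by omega)
      rw [if_neg hks, if_neg hkr, mul_zero, mul_zero]
  rw [Finset.mul_sum, Finset.sum_congr rfl key, Finset.sum_ite_mem]
  congr 1
  exact Finset.inter_eq_right.2 (Finset.range_subset_range.2 hminle)
end

section
/- Let n ≥ 1 and L, r > 0, and let X_1, …, X_n be independent random variables each uniformly distributed on [0, L]. Form the random graph G_0(n, L) on vertex set {0, X_1, …, X_n} (i.e., the graph G(n, L) augmented by a fixed node at the point 0) with an edge between two vertices whenever their distance is at most r. Then the probability that G_0(n, L) is connected equals ∑_{i=0}^{k_2} (−1)^i · C(n, i) · (1 − i r / L)^n, where k_2 = min(n, ⌊L/r⌋) and C(·,·) denotes the binomial coefficient. Equivalently, the probability (with respect to the uniform product measure on [0,L]^n) that every gap between consecutive order statistics of 0, X_1, …, X_n is at most r equals this sum. -/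
open MeasureTheory
open scoped Classical


theorem sort_gap_iff {n : ℕ} (f : Fin (n+1) → ℝ) {r : ℝ} (hr : 0 ≤ r) :
    (∀ i j : Fin (n + 1), (i : ℕ) + 1 = (j : ℕ) →
        f (Tuple.sort f j) - f (Tuple.sort f i) ≤ r)
    ↔ ∀ a ∈ Set.range f, (∀ b ∈ Set.range f, b ≤ a) ∨
        ∃ b ∈ Set.range f, a < b ∧ b ≤ a + r := by
  set σ := Tuple.sort f with hσ
  have hmono : Monotone (f ∘ σ) := Tuple.monotone_sort f
  constructor
  · intro H a ha
    obtain ⟨i, rfl⟩ := ha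
    by_cases hmax : ∀ b ∈ Set.range f, b ≤ f i
    · exact Or.inl hmax
    right
    push_neg at hmax
    obtain ⟨b, ⟨j, rfl⟩, hb⟩ := hmax
    have hne : (Finset.univ.filter (fun k : Fin (n+1) => f i < f (σ k))).Nonempty := by
      refine ⟨σ.symm j, ?_⟩
      simp [hb]
    set m := (Finset.univ.filter (fun k : Fin (n+1) => f i < f (σ k))).min' hne with hm
    clear_value m
    have hmK : f i < f (σ m) := by
      have h := (Finset.univ.filter (fun k : Fin (n+1) => f i < f (σ k))).min'_mem hne
      rw [← hm] at h
      simpa using h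
    have hm0 : m ≠ 0 := by
      intro h0
      have h1 : f (σ m) ≤ f (σ (σ.symm i)) := by
        apply hmono
        rw [h0]
        exact Fin.zero_le _
      rw [Equiv.apply_symm_apply] at h1
      linarith
    obtain ⟨k, rfl⟩ := Fin.eq_succ_of_ne_zero hm0
    have hcast : f (σ k.castSucc) ≤ f i := by
      by_contra hc
      push_neg at hc
      have : k.succ ≤ k.castSucc := by
        rw [hm]
        apply Finset.min'_le
        simp [hc]
      exact absurd this (by simp [Fin.lt_iff_val_lt_val, Fin.le_iff_val_le_val])
    have hgap := H k.castSucc k.succ (by simp)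
    exact ⟨f (σ k.succ), ⟨σ k.succ, rfl⟩, hmK, by linarith⟩
  · intro D i j hij
    have hin : (i : ℕ) < n + 1 := i.isLt
    have hjn : (j : ℕ) < n + 1 := j.isLt
    rcases le_or_gt (f (σ j)) (f (σ i)) with h | h
    · linarith
    rcases D (f (σ i)) ⟨σ i, rfl⟩ with hmax | ⟨b, ⟨jj, rfl⟩, hb1, hb2⟩
    · exact absurd (hmax (f (σ j)) ⟨σ j, rfl⟩) (not_le.mpr h)
    · have hk' : f (σ (σ.symm jj)) = f jj := by rw [Equiv.apply_symm_apply]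
      have hik : i < σ.symm jj := by
        by_contra hc
        push_neg at hc
        have := hmono hc
        simp only [Function.comp_apply] at this
        rw [hk'] at this
        linarith
      have hjk : j ≤ σ.symm jj := by
        rw [Fin.le_iff_val_le_val, ← hij]
        exact hik
      have := hmono hjk
      simp only [Function.comp_apply] at this
      rw [hk'] at this
      linarith


def posSimplexAux (n : ℕ) (t : ℝ) : Set (Fin n → ℝ) :=
  {g | (∀ i, 0 < g i) ∧ ∑ i, g i ≤ t}

lemma measurableSet_posSimplexAux (n : ℕ) (t : ℝ) : MeasurableSet (posSimplexAux n t) := by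
  have h1 : MeasurableSet {g : Fin n → ℝ | ∀ i, 0 < g i} := by
    have : {g : Fin n → ℝ | ∀ i, 0 < g i} = ⋂ i, {g | 0 < g i} := by
      ext g; simp
    rw [this]
    exact MeasurableSet.iInter fun i =>
      measurableSet_lt measurable_const (measurable_pi_apply i)
  exact h1.inter (measurableSet_le
    (Finset.measurable_sum _ fun i _ => measurable_pi_apply i) measurable_const)

lemma posSimplexAux_empty {n : ℕ} {t : ℝ} (ht : t < 0) : posSimplexAux n t = ∅ := by
  ext g
  simp only [posSimplexAux, Set.mem_setOf_eq, Set.mem_empty_iff_false, iff_false, not_and]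
  intro hg
  have : (0:ℝ) ≤ ∑ i, g i := Finset.sum_nonneg fun i _ => (hg i).le
  linarith

lemma volume_posSimplexAux : ∀ (n : ℕ) (t : ℝ), 0 ≤ t →
    volume (posSimplexAux n t) = ENNReal.ofReal (t ^ n / n.factorial) := by
  intro n
  induction n with
  | zero =>
    intro t ht
    have h : posSimplexAux 0 t = Set.univ := by
      ext g
      simp [posSimplexAux, ht]
    rw [h]
    simp only [pow_zero, Nat.factorial_zero, Nat.cast_one, div_one, ENNReal.ofReal_one]
    rw [MeasureTheory.volume_pi, Measure.pi_univ]
    simp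
  | succ n ih =>
    intro t ht
    set B : Set (ℝ × (Fin n → ℝ)) :=
      {p | 0 < p.1 ∧ ((∀ i, 0 < p.2 i) ∧ ∑ i, p.2 i ≤ t - p.1)} with hB
    have hBm : MeasurableSet B := by
      have h1 : MeasurableSet {p : ℝ × (Fin n → ℝ) | 0 < p.1} :=
        measurableSet_lt measurable_const measurable_fst
      have h2 : MeasurableSet {p : ℝ × (Fin n → ℝ) | ∀ i, 0 < p.2 i} := by
        have : {p : ℝ × (Fin n → ℝ) | ∀ i, 0 < p.2 i} = ⋂ i, {p | 0 < p.2 i} := by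
          ext p; simp
        rw [this]
        exact MeasurableSet.iInter fun i =>
          measurableSet_lt measurable_const (by fun_prop)
      have h3 : MeasurableSet {p : ℝ × (Fin n → ℝ) | ∑ i, p.2 i ≤ t - p.1} :=
        measurableSet_le
          (Finset.measurable_sum _ fun i _ => by fun_prop)
          (measurable_const.sub measurable_fst)
      exact h1.inter (h2.inter h3)
    -- posSimplexAux (n+1) t is the preimage of B under piFinSuccAbove
    have hpre : posSimplexAux (n+1) t
        = (MeasurableEquiv.piFinSuccAbove (fun _ : Fin (n+1) => ℝ) 0) ⁻¹' B := by
      ext x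
      simp only [posSimplexAux, Set.mem_setOf_eq, Set.mem_preimage,
        MeasurableEquiv.piFinSuccAbove_apply, Fin.removeNth_zero, hB, Fin.tail,
        Fin.insertNthEquiv_zero, Fin.consEquiv_symm_apply]
      constructor
      · rintro ⟨hpos, hsum⟩
        refine ⟨hpos 0, fun i => hpos _, ?_⟩
        rw [Fin.sum_univ_succ] at hsum
        linarith
      · rintro ⟨h0, hpos, hsum⟩
        constructor
        · intro i
          rcases Fin.eq_zero_or_eq_succ i with rfl | ⟨j, rfl⟩
          · exact h0
          · simpa using hpos j
        · rw [Fin.sum_univ_succ]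
          linarith
    have hmp := MeasureTheory.volume_preserving_piFinSuccAbove (fun _ : Fin (n+1) => ℝ) 0
    rw [hpre, hmp.measure_preimage hBm.nullMeasurableSet]
    -- now compute the product measure of B by slicing
    have hvol : (volume : Measure (ℝ × (Fin n → ℝ))) = Measure.prod volume volume := rfl
    rw [hvol, Measure.prod_apply hBm]
    have hslice : ∀ a : ℝ,
        volume (Prod.mk a ⁻¹' B)
          = Set.indicator (Set.Ioc 0 t)
              (fun a => ENNReal.ofReal ((t - a) ^ n / n.factorial)) a := by
      intro a
      have hsl : Prod.mk a ⁻¹' B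
          = if 0 < a then posSimplexAux n (t - a) else ∅ := by
        ext y
        by_cases ha : 0 < a <;> simp [hB, posSimplexAux, ha]
      rw [hsl]
      by_cases ha : 0 < a
      · rw [if_pos ha]
        by_cases hat : a ≤ t
        · rw [ih (t - a) (by linarith), Set.indicator_of_mem (Set.mem_Ioc.mpr ⟨ha, hat⟩)]
        · rw [posSimplexAux_empty (by linarith), Set.indicator_of_notMem
            (by simp [Set.mem_Ioc, ha, hat])]
          simp
      · rw [if_neg ha, Set.indicator_of_notMem (by simp [Set.mem_Ioc, ha])]
        simp
    rw [lintegral_congr hslice, lintegral_indicator measurableSet_Ioc]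
    have hint : (∫⁻ a in Set.Ioc 0 t, ENNReal.ofReal ((t - a) ^ n / n.factorial))
        = ENNReal.ofReal (∫ a in Set.Ioc 0 t, (t - a) ^ n / n.factorial) := by
      rw [← MeasureTheory.ofReal_integral_eq_lintegral_ofReal]
      · exact (Continuous.integrableOn_Ioc (by continuity))
      · refine (ae_restrict_iff' measurableSet_Ioc).2 (Filter.Eventually.of_forall ?_)
        intro a ha
        have : 0 ≤ t - a := by linarith [ha.2]
        positivity
    rw [hint]
    congr 1
    rw [← intervalIntegral.integral_of_le ht]
    have h1 : (∫ x in (0:ℝ)..t, (t - x) ^ n / n.factorial)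
        = (∫ x in (0:ℝ)..t, (t - x) ^ n) / n.factorial := by
      rw [intervalIntegral.integral_div]
    rw [h1]
    have h2 : (∫ x in (0:ℝ)..t, (t - x) ^ n) = ∫ x in (0:ℝ)..t, x ^ n := by
      have := intervalIntegral.integral_comp_sub_left (a := (0:ℝ)) (b := t)
        (fun x => x ^ n) t
      simpa using this
    rw [h2, integral_pow]
    have hfac : ((n+1).factorial : ℝ) = (n+1) * n.factorial := by
      rw [Nat.factorial_succ]; push_cast; ring
    rw [hfac]
    have hn1 : ((n:ℝ)+1) ≠ 0 := by positivity
    have hnf : (n.factorial : ℝ) ≠ 0 := Nat.cast_ne_zero.2 n.factorial_ne_zero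
    field_simp
    simp


lemma inclExclAux {α ι : Type*} [MeasurableSpace α] (P : ι → Set α)
    (hP : ∀ i, MeasurableSet (P i)) (u : Finset ι) :
    ∀ (μ : Measure α), IsFiniteMeasure μ →
      (μ (⋂ i ∈ u, P i)).toReal
        = ∑ T ∈ u.powerset, (-1:ℝ)^T.card * (μ (⋂ i ∈ (T:Finset ι), (P i)ᶜ)).toReal := by
  classical
  induction u using Finset.induction_on with
  | empty =>
    intro μ hμ
    simp
  | @insert a u ha ih =>
    intro μ hμ
    have hX : MeasurableSet (⋂ i ∈ u, P i) :=
      MeasurableSet.biInter u.countable_toSet (fun i _ => hP i)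
    have key : (μ (⋂ i ∈ insert a u, P i)).toReal
        = (μ (⋂ i ∈ u, P i)).toReal - ((μ.restrict (P a)ᶜ) (⋂ i ∈ u, P i)).toReal := by
      rw [Finset.set_biInter_insert, Set.inter_comm]
      have hsplit := measure_inter_add_diff (μ := μ) (⋂ i ∈ u, P i) (hP a)
      have hdiff : (⋂ i ∈ u, P i) \ P a = (⋂ i ∈ u, P i) ∩ (P a)ᶜ := Set.diff_eq _ _
      rw [Measure.restrict_apply hX, ← hdiff]
      have h2 : (μ ((⋂ i ∈ u, P i) ∩ P a)).toReal + (μ ((⋂ i ∈ u, P i) \ P a)).toReal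
          = (μ (⋂ i ∈ u, P i)).toReal := by
        rw [← ENNReal.toReal_add (measure_ne_top μ _) (measure_ne_top μ _), hsplit]
      linarith
    rw [key, ih μ hμ, ih (μ.restrict (P a)ᶜ) inferInstance,
      Finset.sum_powerset_insert ha]
    have hterm : ∀ T ∈ u.powerset,
        (-1:ℝ)^(insert a T).card * (μ (⋂ i ∈ (insert a T : Finset ι), (P i)ᶜ)).toReal
        = -((-1:ℝ)^T.card * ((μ.restrict (P a)ᶜ) (⋂ i ∈ (T : Finset ι), (P i)ᶜ)).toReal) := by
      intro T hT
      have haT : a ∉ T := fun h => ha (Finset.mem_powerset.1 hT h)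
      have hTm : MeasurableSet (⋂ i ∈ (T : Finset ι), (P i)ᶜ) :=
        MeasurableSet.biInter T.countable_toSet (fun i _ => (hP i).compl)
      rw [Finset.card_insert_of_notMem haT, Finset.set_biInter_insert,
        Measure.restrict_apply hTm, pow_succ, Set.inter_comm]
      ring
    rw [Finset.sum_congr rfl hterm]
    rw [Finset.sum_neg_distrib]
    ring


lemma volume_eq_zero_nonInj (n : ℕ) :
    volume {x : Fin n → ℝ | ¬ Function.Injective x} = 0 := by
  have : {x : Fin n → ℝ | ¬ Function.Injective x}
      ⊆ ⋃ i : Fin n, ⋃ j : Fin n, ⋃ _ : i ≠ j, {x : Fin n → ℝ | x i = x j} := by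
    intro x hx
    simp only [Set.mem_setOf_eq, Function.Injective, not_forall] at hx
    obtain ⟨i, j, hij, hne⟩ := hx
    simp only [Set.mem_iUnion]
    exact ⟨i, j, hne, hij⟩
  refine measure_mono_null this ?_
  refine measure_iUnion_null fun i => measure_iUnion_null fun j => measure_iUnion_null fun hij => ?_
  have hker : {x : Fin n → ℝ | x i = x j}
      = (LinearMap.ker ((LinearMap.proj i : (Fin n → ℝ) →ₗ[ℝ] ℝ)
          - LinearMap.proj j) : Set (Fin n → ℝ)) := by
    ext x
    simp [LinearMap.mem_ker, sub_eq_zero]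
  rw [hker]
  apply Measure.addHaar_submodule
  intro htop
  have h1 : (Pi.single i 1 : Fin n → ℝ) ∈ LinearMap.ker
      ((LinearMap.proj i : (Fin n → ℝ) →ₗ[ℝ] ℝ) - LinearMap.proj j) := by
    rw [htop]; trivial
  simp only [LinearMap.mem_ker, LinearMap.sub_apply, LinearMap.proj_apply] at h1
  rw [Pi.single_eq_same, Pi.single_eq_of_ne (Ne.symm hij)] at h1
  norm_num at h1

lemma volume_eq_zero_eqZero (n : ℕ) (i : Fin n) :
    volume {x : Fin n → ℝ | x i = 0} = 0 := by
  have hker : {x : Fin n → ℝ | x i = 0}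
      = (LinearMap.ker (LinearMap.proj i : (Fin n → ℝ) →ₗ[ℝ] ℝ) : Set (Fin n → ℝ)) := by
    ext x; simp [LinearMap.mem_ker]
  rw [hker]
  apply Measure.addHaar_submodule
  intro htop
  have h1 : (Pi.single i 1 : Fin n → ℝ) ∈
      LinearMap.ker (LinearMap.proj i : (Fin n → ℝ) →ₗ[ℝ] ℝ) := by
    rw [htop]; trivial
  simp only [LinearMap.mem_ker, LinearMap.proj_apply] at h1
  rw [Pi.single_eq_same] at h1
  norm_num at h1

lemma measurePreserving_comp_perm {n : ℕ} (τ : Equiv.Perm (Fin n)) :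
    MeasurePreserving (fun x : Fin n → ℝ => x ∘ τ) volume volume := by
  have h := MeasureTheory.volume_measurePreserving_piCongrLeft (fun _ : Fin n => ℝ) τ.symm
  have heq : (fun x : Fin n → ℝ => x ∘ τ)
      = ⇑(MeasurableEquiv.piCongrLeft (fun _ : Fin n => ℝ) τ.symm) := by
    funext x
    rw [MeasurableEquiv.coe_piCongrLeft]
    funext b
    have : b = τ.symm (τ b) := (Equiv.symm_apply_apply τ b).symm
    rw [this, Equiv.piCongrLeft_apply_apply]
    simp
  rw [heq]
  exact h

lemma measurableSet_chamber {n : ℕ} (τ : Equiv.Perm (Fin n)) :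
    MeasurableSet {x : Fin n → ℝ | StrictMono (x ∘ τ)} := by
  have : {x : Fin n → ℝ | StrictMono (x ∘ τ)}
      = ⋂ (i : Fin n), ⋂ (j : Fin n), ⋂ (_ : i < j), {x | x (τ i) < x (τ j)} := by
    ext x
    simp only [Set.mem_setOf_eq, Set.mem_iInter]
    exact ⟨fun h i j hij => h hij, fun h a b hab => h a b hab⟩
  rw [this]
  exact MeasurableSet.iInter fun i => MeasurableSet.iInter fun j =>
    MeasurableSet.iInter fun _ =>
      measurableSet_lt (measurable_pi_apply _) (measurable_pi_apply _)

lemma vol_symmetric_decomp {n : ℕ} (W : Set (Fin n → ℝ)) (hWm : MeasurableSet W)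
    (hsym : ∀ τ : Equiv.Perm (Fin n), ∀ x, x ∘ τ ∈ W ↔ x ∈ W) :
    volume W = n.factorial * volume (W ∩ {x | StrictMono x}) := by
  classical
  set C : Equiv.Perm (Fin n) → Set (Fin n → ℝ) := fun τ => {x | StrictMono (x ∘ τ)} with hC
  have hCm : ∀ τ, MeasurableSet (C τ) := fun τ => measurableSet_chamber τ
  -- W is a.e. covered by the chambers
  have hcover : W ⊆ (⋃ τ ∈ (Finset.univ : Finset (Equiv.Perm (Fin n))), (W ∩ C τ))
      ∪ {x : Fin n → ℝ | ¬ Function.Injective x} := by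
    intro x hx
    by_cases hinj : Function.Injective x
    · left
      set τ := Tuple.sort x with hτ
      have hmono : Monotone (x ∘ τ) := Tuple.monotone_sort x
      have hsm : StrictMono (x ∘ τ) :=
        hmono.strictMono_of_injective (hinj.comp τ.injective)
      simp only [Set.mem_iUnion]
      exact ⟨τ, Finset.mem_univ τ, hx, hsm⟩
    · right; exact hinj
  -- chambers are pairwise disjoint
  have hdisj : Set.PairwiseDisjoint (↑(Finset.univ : Finset (Equiv.Perm (Fin n))))
      (fun τ => W ∩ C τ) := by
    intro τ _ τ' _ hne
    refine Set.disjoint_left.mpr ?_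
    rintro x ⟨-, hx1⟩ ⟨-, hx2⟩
    have h1 : StrictMono (x ∘ τ) := hx1
    have h2 : StrictMono (x ∘ τ') := hx2
    have hinj : Function.Injective x := by
      have hxt : Function.Injective (x ∘ τ) := h1.injective
      intro a b hab
      have h3 : (x ∘ τ) (τ.symm a) = (x ∘ τ) (τ.symm b) := by
        simp only [Function.comp_apply, Equiv.apply_symm_apply]
        exact hab
      have := hxt h3
      simpa using congrArg τ this
    have hrange : Set.range (x ∘ τ) = Set.range (x ∘ τ') := by
      rw [Set.range_comp, Set.range_comp, Equiv.range_eq_univ, Equiv.range_eq_univ]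
    have heq : x ∘ τ = x ∘ τ' := (StrictMono.range_inj h1 h2).mp hrange
    apply hne
    ext i
    exact congrArg Fin.val (hinj (congrFun heq i))
  have hvolW : volume W
      = volume (⋃ τ ∈ (Finset.univ : Finset (Equiv.Perm (Fin n))), (W ∩ C τ)) := by
    apply le_antisymm
    · calc volume W ≤ volume ((⋃ τ ∈ (Finset.univ : Finset (Equiv.Perm (Fin n))),
            (W ∩ C τ)) ∪ {x : Fin n → ℝ | ¬ Function.Injective x}) := measure_mono hcover
        _ ≤ volume (⋃ τ ∈ (Finset.univ : Finset (Equiv.Perm (Fin n))), (W ∩ C τ))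
            + volume {x : Fin n → ℝ | ¬ Function.Injective x} := measure_union_le _ _
        _ = volume (⋃ τ ∈ (Finset.univ : Finset (Equiv.Perm (Fin n))), (W ∩ C τ)) := by
            rw [volume_eq_zero_nonInj, add_zero]
    · apply measure_mono
      simp only [Set.iUnion_subset_iff]
      intro τ _
      exact Set.inter_subset_left
  rw [hvolW, measure_biUnion_finset hdisj (fun τ _ => hWm.inter (hCm τ))]
  have hCeq : ∀ τ : Equiv.Perm (Fin n), volume (W ∩ C τ)
      = volume (W ∩ {x : Fin n → ℝ | StrictMono x}) := by
    intro τ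
    have hpre : (fun x : Fin n → ℝ => x ∘ τ) ⁻¹' (W ∩ {x | StrictMono x}) = W ∩ C τ := by
      ext x
      simp only [Set.mem_preimage, Set.mem_inter_iff, Set.mem_setOf_eq, hC]
      rw [hsym τ x]
    have hsm : MeasurableSet {x : Fin n → ℝ | StrictMono x} := by
      have := measurableSet_chamber (1 : Equiv.Perm (Fin n))
      simpa using this
    rw [← hpre, (measurePreserving_comp_perm τ).measure_preimage
      ((hWm.inter hsm).nullMeasurableSet)]
  rw [Finset.sum_congr rfl (fun τ _ => hCeq τ), Finset.sum_const, Finset.card_univ,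
    Fintype.card_perm, Fintype.card_fin, nsmul_eq_mul]


noncomputable def psumMap (N : ℕ) : (Fin N → ℝ) →ₗ[ℝ] (Fin N → ℝ) :=
  LinearMap.pi fun k => ∑ j ∈ Finset.univ.filter (fun j => j ≤ k), LinearMap.proj j

lemma psumMap_apply {N : ℕ} (g : Fin N → ℝ) (k : Fin N) :
    psumMap N g k = ∑ j ∈ Finset.univ.filter (fun j => j ≤ k), g j := by
  simp [psumMap, LinearMap.pi_apply, LinearMap.sum_apply]

lemma filter_le_zero_eq (m : ℕ) :
    Finset.univ.filter (fun j : Fin (m+1) => j ≤ 0) = {0} := by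
  ext b
  simp [Fin.le_zero_iff]

lemma filter_le_succ_eq {m : ℕ} (j : Fin m) :
    Finset.univ.filter (fun b : Fin (m+1) => b ≤ j.succ)
      = insert j.succ (Finset.univ.filter (fun b : Fin (m+1) => b ≤ j.castSucc)) := by
  ext b
  simp only [Finset.mem_filter, Finset.mem_univ, true_and, Finset.mem_insert]
  rw [Fin.le_iff_val_le_val, Fin.le_iff_val_le_val]
  simp only [Fin.val_succ, Fin.coe_castSucc]
  constructor
  · intro h
    rcases Nat.le_succ_iff_eq_or_le.mp h with h1 | h1
    · left
      exact Fin.ext h1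
    · right; exact h1
  · rintro (rfl | h)
    · exact le_refl _
    · omega
lemma filter_le_last_eq (m : ℕ) :
    Finset.univ.filter (fun b : Fin (m+1) => b ≤ Fin.last m) = Finset.univ := by
  ext b
  simp [Fin.le_last]

lemma psum_zero' {m : ℕ} (g : Fin (m+1) → ℝ) : psumMap (m+1) g 0 = g 0 := by
  rw [psumMap_apply, filter_le_zero_eq]
  simp

lemma psum_succ' {m : ℕ} (g : Fin (m+1) → ℝ) (j : Fin m) :
    psumMap (m+1) g j.succ = psumMap (m+1) g j.castSucc + g j.succ := by
  rw [psumMap_apply, psumMap_apply, filter_le_succ_eq j, Finset.sum_insert (by simp [Fin.le_iff_val_le_val])]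
  ring

lemma psum_last {m : ℕ} (g : Fin (m+1) → ℝ) :
    psumMap (m+1) g (Fin.last m) = ∑ i, g i := by
  rw [psumMap_apply, filter_le_last_eq]

/-- The gap of the cons-tuple of a partial sum is the original value. -/
lemma cons_psum_diff {m : ℕ} (g : Fin (m+1) → ℝ) (k : Fin (m+1)) :
    (Fin.cons 0 (psumMap (m+1) g) : Fin (m+2) → ℝ) k.succ
      - (Fin.cons 0 (psumMap (m+1) g) : Fin (m+2) → ℝ) k.castSucc = g k := by
  induction k using Fin.cases with
  | zero =>
    rw [Fin.cons_succ, Fin.castSucc_zero, Fin.cons_zero, psum_zero']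
    ring
  | succ j =>
    rw [Fin.cons_succ, ← Fin.succ_castSucc, Fin.cons_succ, psum_succ']
    ring

lemma cons_diff_eval {m : ℕ} (x : Fin (m+1) → ℝ) (j : Fin m) :
    (Fin.cons 0 x : Fin (m+2) → ℝ) j.succ.succ
      - (Fin.cons 0 x : Fin (m+2) → ℝ) j.succ.castSucc = x j.succ - x j.castSucc := by
  rw [Fin.cons_succ, ← Fin.succ_castSucc, Fin.cons_succ]

lemma chamber_eq_image (m : ℕ) (L r : ℝ) :
    {x : Fin (m+1) → ℝ |
        (∀ k : Fin (m+1), 0 < (Fin.cons 0 x : Fin (m+2) → ℝ) k.succ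
              - (Fin.cons 0 x : Fin (m+2) → ℝ) k.castSucc
            ∧ (Fin.cons 0 x : Fin (m+2) → ℝ) k.succ
              - (Fin.cons 0 x : Fin (m+2) → ℝ) k.castSucc ≤ r)
          ∧ x (Fin.last m) ≤ L}
      = (psumMap (m+1)) '' {g : Fin (m+1) → ℝ | (∀ i, 0 < g i ∧ g i ≤ r) ∧ ∑ i, g i ≤ L} := by
  ext x
  simp only [Set.mem_setOf_eq, Set.mem_image]
  constructor
  · rintro ⟨hgap, hlast⟩
    refine ⟨fun k => (Fin.cons 0 x : Fin (m+2) → ℝ) k.succ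
      - (Fin.cons 0 x : Fin (m+2) → ℝ) k.castSucc, ⟨hgap, ?_⟩, ?_⟩
    · -- sum of gaps equals x last
      have hpsum : psumMap (m+1) (fun k => (Fin.cons 0 x : Fin (m+2) → ℝ) k.succ
          - (Fin.cons 0 x : Fin (m+2) → ℝ) k.castSucc) = x := by
        funext k
        induction k using Fin.induction with
        | zero =>
          rw [psum_zero']
          simp
        | succ j ih =>
          rw [psum_succ', ih, cons_diff_eval]
          ring
      rw [← psum_last, hpsum]
      exact hlast
    · -- x is the partial sum of its gaps
      funext k
      induction k using Fin.induction with
      | zero =>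
        rw [psum_zero']
        simp
      | succ j ih =>
        rw [psum_succ', ih, cons_diff_eval]
        ring
  · rintro ⟨g, ⟨hg, hsum⟩, rfl⟩
    constructor
    · intro k
      rw [cons_psum_diff]
      exact hg k
    · rw [psum_last]
      exact hsum

lemma strictMono_cons_iff {m : ℕ} (x : Fin (m+1) → ℝ) :
    StrictMono (Fin.cons 0 x : Fin (m+2) → ℝ)
      ↔ ∀ k : Fin (m+1), 0 < (Fin.cons 0 x : Fin (m+2) → ℝ) k.succ
          - (Fin.cons 0 x : Fin (m+2) → ℝ) k.castSucc := by
  rw [Fin.strictMono_iff_lt_succ]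
  exact ⟨fun h k => sub_pos.mpr (h k), fun h k => sub_pos.mp (h k)⟩

lemma E_eq_chamber (m : ℕ) (L r : ℝ) (hr : 0 < r) :
    {x : Fin (m+1) → ℝ | ∀ i j : Fin (m+2), (i : ℕ) + 1 = (j : ℕ) →
        (Fin.cons 0 x : Fin (m + 2) → ℝ) (Tuple.sort (Fin.cons 0 x) j)
          - (Fin.cons 0 x : Fin (m + 2) → ℝ) (Tuple.sort (Fin.cons 0 x) i) ≤ r}
      ∩ (Set.pi Set.univ fun _ : Fin (m+1) => Set.Icc (0:ℝ) L)
      ∩ {x | StrictMono x} ∩ {x | 0 < x 0}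
    = {x : Fin (m+1) → ℝ |
        (∀ k : Fin (m+1), 0 < (Fin.cons 0 x : Fin (m+2) → ℝ) k.succ
              - (Fin.cons 0 x : Fin (m+2) → ℝ) k.castSucc
            ∧ (Fin.cons 0 x : Fin (m+2) → ℝ) k.succ
              - (Fin.cons 0 x : Fin (m+2) → ℝ) k.castSucc ≤ r)
          ∧ x (Fin.last m) ≤ L} := by
  ext x
  simp only [Set.mem_inter_iff, Set.mem_setOf_eq, Set.mem_pi, Set.mem_univ, true_implies,
    Set.mem_Icc]
  constructor
  · rintro ⟨⟨⟨hE, hbox⟩, hsm⟩, h0⟩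
    have hSMf : StrictMono (Fin.cons 0 x : Fin (m+2) → ℝ) := by
      rw [Fin.strictMono_iff_lt_succ]
      intro k
      induction k using Fin.cases with
      | zero =>
        rw [Fin.castSucc_zero, Fin.cons_zero, Fin.cons_succ]
        exact h0
      | succ j =>
        rw [Fin.cons_succ, ← Fin.succ_castSucc, Fin.cons_succ]
        exact hsm (Fin.castSucc_lt_succ (i := j))
    have hsort : Tuple.sort (Fin.cons 0 x : Fin (m+2) → ℝ) = Equiv.refl _ :=
      Tuple.sort_eq_refl_iff_monotone.mpr hSMf.monotone
    rw [hsort] at hE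
    simp only [Equiv.refl_apply] at hE
    refine ⟨fun k => ⟨sub_pos.mpr ?_, hE k.castSucc k.succ (by simp)⟩, (hbox (Fin.last m)).2⟩
    · exact hSMf (Fin.castSucc_lt_succ (i := k))
  · rintro ⟨hgap, hlast⟩
    have hSMf : StrictMono (Fin.cons 0 x : Fin (m+2) → ℝ) :=
      (strictMono_cons_iff x).mpr fun k => (hgap k).1
    have hsm : StrictMono x := by
      intro a b hab
      have := hSMf (Fin.succ_lt_succ_iff.mpr hab)
      rwa [Fin.cons_succ, Fin.cons_succ] at this
    have h0 : 0 < x 0 := by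
      have := hSMf (Fin.succ_pos (0 : Fin (m+1)))
      rwa [Fin.cons_zero, Fin.cons_succ] at this
    have hpos : ∀ k, 0 < x k := by
      intro k
      have := hSMf (Fin.succ_pos k)
      rwa [Fin.cons_zero, Fin.cons_succ] at this
    have hsort : Tuple.sort (Fin.cons 0 x : Fin (m+2) → ℝ) = Equiv.refl _ :=
      Tuple.sort_eq_refl_iff_monotone.mpr hSMf.monotone
    refine ⟨⟨⟨?_, ?_⟩, hsm⟩, h0⟩
    · intro i j hij
      rw [hsort]
      simp only [Equiv.refl_apply]
      have hiv : (i : ℕ) < m + 1 := by omega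
      set k : Fin (m+1) := ⟨(i : ℕ), hiv⟩ with hk
      have hic : i = k.castSucc := by
        apply Fin.ext
        simp [hk]
      have hjc : j = k.succ := by
        apply Fin.ext
        simp [hk, ← hij]
      rw [hic, hjc]
      exact (hgap k).2
    · intro k
      exact ⟨(hpos k).le, le_trans (hsm.monotone (Fin.le_last k)) hlast⟩

lemma det_psumMap (N : ℕ) : LinearMap.det (psumMap N) = 1 := by
  rw [← LinearMap.det_toMatrix (Pi.basisFun ℝ (Fin N))]
  have hmat : ∀ k j : Fin N, LinearMap.toMatrix (Pi.basisFun ℝ (Fin N))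
      (Pi.basisFun ℝ (Fin N)) (psumMap N) k j = if j ≤ k then 1 else 0 := by
    intro k j
    rw [LinearMap.toMatrix_apply]
    simp only [Pi.basisFun_repr, Pi.basisFun_apply]
    rw [psumMap_apply]
    by_cases h : j ≤ k
    · rw [if_pos h, Finset.sum_eq_single j]
      · simp
      · intro b hb hbj
        simp only [Pi.single_apply]
        exact if_neg (by exact fun hc => hbj (by exact hc))
      · intro hj
        exact absurd (by simp [h]) hj
    · rw [if_neg h, Finset.sum_eq_zero]
      intro b hb
      have hbk : b ≤ k := (Finset.mem_filter.mp hb).2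
      have hbj : b ≠ j := fun hc => h (hc ▸ hbk)
      simp [Pi.single_apply, if_neg hbj]
  have htri : ∀ i j : Fin N, i < j → LinearMap.toMatrix (Pi.basisFun ℝ (Fin N))
      (Pi.basisFun ℝ (Fin N)) (psumMap N) i j = 0 := by
    intro i j hij
    rw [hmat]
    exact if_neg (by exact fun hc => absurd (lt_of_lt_of_le hij hc) (lt_irrefl _))
  rw [Matrix.det_of_lowerTriangular _ htri]
  rw [Finset.prod_congr rfl (fun i _ => hmat i i)]
  simp

lemma volume_image_psumMap {N : ℕ} (B : Set (Fin N → ℝ)) :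
    volume ((psumMap N) '' B) = volume B := by
  rw [Measure.addHaar_image_linearMap, det_psumMap]
  simp


lemma translation_slice {N : ℕ} (L r : ℝ) (hr : 0 < r) (T : Finset (Fin N)) :
    (⋂ i ∈ T, {g : Fin N → ℝ | g i ≤ r}ᶜ) ∩ posSimplexAux N L
      = (fun g : Fin N → ℝ => g + (fun i => if i ∈ T then -r else 0)) ⁻¹'
          posSimplexAux N (L - T.card * r) := by
  ext g
  simp only [Set.mem_inter_iff, Set.mem_iInter, Set.mem_compl_iff, Set.mem_setOf_eq,
    Set.mem_preimage, posSimplexAux, Pi.add_apply, not_le]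
  have hsum : ∑ i, (g i + (if i ∈ T then (-r:ℝ) else 0)) = (∑ i, g i) - T.card * r := by
    rw [Finset.sum_add_distrib]
    congr 1
    rw [Finset.sum_ite_mem, Finset.univ_inter, Finset.sum_const, nsmul_eq_mul]
    ring
  rw [hsum]
  constructor
  · rintro ⟨hT, hpos, hsum'⟩
    refine ⟨fun i => ?_, by linarith⟩
    by_cases hi : i ∈ T
    · simp only [hi, if_true]
      have := hT i hi
      linarith
    · simp only [hi, if_false]
      have := hpos i
      linarith
  · rintro ⟨hpos, hsum'⟩
    have hp : ∀ i, 0 < g i := by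
      intro i
      have := hpos i
      by_cases hi : i ∈ T
      · simp only [hi, if_true] at this
        linarith
      · simpa [hi] using this
    refine ⟨fun i hi => ?_, hp, by linarith⟩
    have := hpos i
    simp only [hi, if_true] at this
    linarith

lemma volume_gapBox (N : ℕ) (L r : ℝ) (hL : 0 < L) (hr : 0 < r) :
    (volume {g : Fin N → ℝ | (∀ i, 0 < g i ∧ g i ≤ r) ∧ ∑ i, g i ≤ L}).toReal
      = ∑ k ∈ Finset.range (N+1), (N.choose k : ℝ) *
          ((-1:ℝ)^k * (if (k:ℝ) * r ≤ L then (L - k*r)^N / N.factorial else 0)) := by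
  classical
  set μ := volume.restrict (posSimplexAux N L) with hμ
  haveI : IsFiniteMeasure μ := by
    constructor
    rw [hμ, Measure.restrict_apply_univ, volume_posSimplexAux N L hL.le]
    exact ENNReal.ofReal_lt_top
  set P : Fin N → Set (Fin N → ℝ) := fun i => {g | g i ≤ r} with hP
  have hPm : ∀ i, MeasurableSet (P i) := fun i =>
    measurableSet_le (measurable_pi_apply i) measurable_const
  have hBeq : {g : Fin N → ℝ | (∀ i, 0 < g i ∧ g i ≤ r) ∧ ∑ i, g i ≤ L}
      = (⋂ i ∈ (Finset.univ : Finset (Fin N)), P i) ∩ posSimplexAux N L := by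
    ext g
    simp only [Set.mem_setOf_eq, Set.mem_inter_iff, Set.mem_iInter, posSimplexAux,
      Finset.mem_univ, true_implies, hP]
    constructor
    · rintro ⟨h1, h2⟩
      exact ⟨fun i => (h1 i).2, fun i => (h1 i).1, h2⟩
    · rintro ⟨h1, h2, h3⟩
      exact ⟨fun i => ⟨h2 i, h1 i⟩, h3⟩
  have hBvol : volume {g : Fin N → ℝ | (∀ i, 0 < g i ∧ g i ≤ r) ∧ ∑ i, g i ≤ L}
      = μ (⋂ i ∈ (Finset.univ : Finset (Fin N)), P i) := by
    rw [hμ, Measure.restrict_apply (Finset.measurableSet_biInter _ (fun i _ => hPm i)), hBeq]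
  rw [hBvol, inclExclAux P hPm Finset.univ μ inferInstance]
  have hterm : ∀ T ∈ (Finset.univ : Finset (Fin N)).powerset,
      (-1:ℝ)^T.card * (μ (⋂ i ∈ (T : Finset (Fin N)), (P i)ᶜ)).toReal
        = (-1:ℝ)^T.card *
            (if (T.card:ℝ) * r ≤ L then (L - T.card*r)^N / N.factorial else 0) := by
    intro T _
    congr 1
    have hrestr : μ (⋂ i ∈ (T : Finset (Fin N)), (P i)ᶜ)
        = volume ((⋂ i ∈ (T : Finset (Fin N)), (P i)ᶜ) ∩ posSimplexAux N L) := by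
      rw [hμ, Measure.restrict_apply (Finset.measurableSet_biInter _ (fun i _ => (hPm i).compl))]
    rw [hrestr, translation_slice L r hr T,
      measure_preimage_add_right volume _ _, ]
    by_cases hcase : (T.card:ℝ) * r ≤ L
    · rw [if_pos hcase, volume_posSimplexAux N _ (by linarith),
        ENNReal.toReal_ofReal (div_nonneg (pow_nonneg (by linarith) _) (by positivity))]
    · rw [if_neg hcase, posSimplexAux_empty (by push_neg at hcase; linarith)]
      simp
  rw [Finset.sum_congr rfl hterm]
  rw [Finset.sum_powerset_apply_card
    (fun k => (-1:ℝ)^k * (if (k:ℝ) * r ≤ L then (L - k*r)^N / N.factorial else 0))]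
  rw [Finset.card_univ, Fintype.card_fin]
  exact Finset.sum_congr rfl fun k _ => by rw [nsmul_eq_mul]


lemma E_eq_rangeForm (n : ℕ) (r : ℝ) (hr : 0 ≤ r) :
    {x : Fin n → ℝ | ∀ i j : Fin (n + 1), (i : ℕ) + 1 = (j : ℕ) →
        (Fin.cons 0 x : Fin (n + 1) → ℝ) (Tuple.sort (Fin.cons 0 x) j)
          - (Fin.cons 0 x : Fin (n + 1) → ℝ) (Tuple.sort (Fin.cons 0 x) i) ≤ r}
    = {x : Fin n → ℝ | ∀ a ∈ Set.range (Fin.cons 0 x : Fin (n+1) → ℝ),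
        (∀ b ∈ Set.range (Fin.cons 0 x : Fin (n+1) → ℝ), b ≤ a) ∨
        ∃ b ∈ Set.range (Fin.cons 0 x : Fin (n+1) → ℝ), a < b ∧ b ≤ a + r} := by
  ext x
  exact sort_gap_iff (Fin.cons 0 x) hr

lemma E_symm (n : ℕ) (r : ℝ) (hr : 0 ≤ r) (τ : Equiv.Perm (Fin n)) (x : Fin n → ℝ) :
    (x ∘ τ) ∈ {x : Fin n → ℝ | ∀ i j : Fin (n + 1), (i : ℕ) + 1 = (j : ℕ) →
        (Fin.cons 0 x : Fin (n + 1) → ℝ) (Tuple.sort (Fin.cons 0 x) j)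
          - (Fin.cons 0 x : Fin (n + 1) → ℝ) (Tuple.sort (Fin.cons 0 x) i) ≤ r}
    ↔ x ∈ {x : Fin n → ℝ | ∀ i j : Fin (n + 1), (i : ℕ) + 1 = (j : ℕ) →
        (Fin.cons 0 x : Fin (n + 1) → ℝ) (Tuple.sort (Fin.cons 0 x) j)
          - (Fin.cons 0 x : Fin (n + 1) → ℝ) (Tuple.sort (Fin.cons 0 x) i) ≤ r} := by
  rw [E_eq_rangeForm n r hr]
  have hrange : Set.range (Fin.cons 0 (x ∘ τ) : Fin (n+1) → ℝ)
      = Set.range (Fin.cons 0 x : Fin (n+1) → ℝ) := by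
    rw [Fin.range_cons, Fin.range_cons, Set.range_comp, Equiv.range_eq_univ, Set.image_univ]
  simp only [Set.mem_setOf_eq, hrange]

lemma measurable_consEval (n : ℕ) (i : Fin (n+1)) :
    Measurable fun x : Fin n → ℝ => (Fin.cons 0 x : Fin (n+1) → ℝ) i := by
  induction i using Fin.cases with
  | zero => simp only [Fin.cons_zero]; exact measurable_const
  | succ j => simp only [Fin.cons_succ]; exact measurable_pi_apply j

lemma E_measurable (n : ℕ) (r : ℝ) (hr : 0 ≤ r) :
    MeasurableSet {x : Fin n → ℝ | ∀ i j : Fin (n + 1), (i : ℕ) + 1 = (j : ℕ) →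
        (Fin.cons 0 x : Fin (n + 1) → ℝ) (Tuple.sort (Fin.cons 0 x) j)
          - (Fin.cons 0 x : Fin (n + 1) → ℝ) (Tuple.sort (Fin.cons 0 x) i) ≤ r} := by
  rw [E_eq_rangeForm n r hr]
  have hre : {x : Fin n → ℝ | ∀ a ∈ Set.range (Fin.cons 0 x : Fin (n+1) → ℝ),
        (∀ b ∈ Set.range (Fin.cons 0 x : Fin (n+1) → ℝ), b ≤ a) ∨
        ∃ b ∈ Set.range (Fin.cons 0 x : Fin (n+1) → ℝ), a < b ∧ b ≤ a + r}
      = ⋂ i : Fin (n+1),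
          ((⋂ j : Fin (n+1), {x : Fin n → ℝ | (Fin.cons 0 x : Fin (n+1) → ℝ) j
              ≤ (Fin.cons 0 x : Fin (n+1) → ℝ) i})
          ∪ ⋃ j : Fin (n+1),
              ({x : Fin n → ℝ | (Fin.cons 0 x : Fin (n+1) → ℝ) i
                  < (Fin.cons 0 x : Fin (n+1) → ℝ) j}
                ∩ {x : Fin n → ℝ | (Fin.cons 0 x : Fin (n+1) → ℝ) j
                  ≤ (Fin.cons 0 x : Fin (n+1) → ℝ) i + r})) := by
    ext x
    simp only [Set.mem_setOf_eq, Set.mem_iInter, Set.mem_union, Set.mem_iUnion,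
      Set.mem_inter_iff, Set.forall_mem_range, Set.exists_range_iff]
  rw [hre]
  refine MeasurableSet.iInter fun i => MeasurableSet.union ?_ ?_
  · exact MeasurableSet.iInter fun j =>
      measurableSet_le (measurable_consEval n j) (measurable_consEval n i)
  · exact MeasurableSet.iUnion fun j =>
      (measurableSet_lt (measurable_consEval n i) (measurable_consEval n j)).inter
        (measurableSet_le (measurable_consEval n j)
          ((measurable_consEval n i).add_const r))

lemma sigmaFinite_unif (L : ℝ) (hL : 0 < L) :
    SigmaFinite ((ENNReal.ofReal L)⁻¹ • volume.restrict (Set.Icc (0:ℝ) L)) := by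
  have hfin : IsFiniteMeasure ((ENNReal.ofReal L)⁻¹ • volume.restrict (Set.Icc (0:ℝ) L)) := by
    constructor
    rw [Measure.smul_apply, Measure.restrict_apply_univ, Real.volume_Icc, smul_eq_mul]
    exact ENNReal.mul_lt_top (ENNReal.inv_ne_top.mpr (by simp [hL])).lt_top
      ENNReal.ofReal_lt_top
  exact @IsFiniteMeasure.toSigmaFinite _ _ _ hfin

lemma pi_smul_eq (n : ℕ) (L : ℝ) (hL : 0 < L) :
    (Measure.pi fun _ : Fin n => (ENNReal.ofReal L)⁻¹ • volume.restrict (Set.Icc (0:ℝ) L))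
      = ((ENNReal.ofReal L)⁻¹)^n
          • volume.restrict (Set.pi Set.univ fun _ : Fin n => Set.Icc (0:ℝ) L) := by
  refine @Measure.pi_eq (Fin n) _ _ _ _ (fun _ => sigmaFinite_unif L hL) _ ?_
  intro s hs
  rw [Measure.smul_apply, Measure.restrict_apply (MeasurableSet.univ_pi hs),
    ← Set.pi_inter_distrib, MeasureTheory.volume_pi, Measure.pi_pi, smul_eq_mul]
  have hterm : ∀ i : Fin n, ((ENNReal.ofReal L)⁻¹ • volume.restrict (Set.Icc (0:ℝ) L)) (s i)
      = (ENNReal.ofReal L)⁻¹ * volume (s i ∩ Set.Icc (0:ℝ) L) := by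
    intro i
    rw [Measure.smul_apply, Measure.restrict_apply (hs i), smul_eq_mul]
  rw [Finset.prod_congr rfl (fun i _ => hterm i), Finset.prod_mul_distrib,
    Finset.prod_const, Finset.card_univ, Fintype.card_fin]

/-- For `n ≥ 1`, `L, r > 0` and `X_1, …, X_n` i.i.d. uniform on `[0, L]`,
the probability that the random geometric graph `G_0(n, L)` on `{0, X_1, …, X_n}`
(edge iff distance `≤ r`) is connected — equivalently, that every gap between
consecutive order statistics of `0, X_1, …, X_n` is at most `r` — equals
`∑_{i=0}^{k₂} (-1)^i C(n, i) (1 - i r / L)^n` with `k₂ = min n ⌊L/r⌋`. -/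
theorem connectivity_prob_one_dim_access_point (n : ℕ) (hn : 1 ≤ n) (L r : ℝ)
    (hL : 0 < L) (hr : 0 < r) :
    ((Measure.pi fun _ : Fin n =>
        (ENNReal.ofReal L)⁻¹ • volume.restrict (Set.Icc (0 : ℝ) L))
      {x : Fin n → ℝ | ∀ i j : Fin (n + 1), (i : ℕ) + 1 = (j : ℕ) →
          (Fin.cons 0 x : Fin (n + 1) → ℝ) (Tuple.sort (Fin.cons 0 x) j)
            - (Fin.cons 0 x : Fin (n + 1) → ℝ) (Tuple.sort (Fin.cons 0 x) i) ≤ r}).toReal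
      = ∑ i ∈ Finset.range (min n ⌊L / r⌋₊ + 1),
          (-1 : ℝ) ^ i * (n.choose i : ℝ) * (1 - (i : ℝ) * r / L) ^ n := by
  obtain ⟨m, rfl⟩ : ∃ m, n = m + 1 := ⟨n - 1, by omega⟩
  have hEm := E_measurable (m+1) r hr.le
  rw [pi_smul_eq (m+1) L hL, Measure.smul_apply, Measure.restrict_apply hEm, smul_eq_mul]
  -- Notation for the main sets
  set Eset := {x : Fin (m+1) → ℝ | ∀ i j : Fin (m + 1 + 1), (i : ℕ) + 1 = (j : ℕ) →
      (Fin.cons 0 x : Fin (m + 1 + 1) → ℝ) (Tuple.sort (Fin.cons 0 x) j)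
        - (Fin.cons 0 x : Fin (m + 1 + 1) → ℝ) (Tuple.sort (Fin.cons 0 x) i) ≤ r} with hEdef
  set Box := Set.pi Set.univ (fun _ : Fin (m+1) => Set.Icc (0:ℝ) L) with hBoxdef
  have hBoxm : MeasurableSet Box := MeasurableSet.univ_pi fun _ => measurableSet_Icc
  have hWm : MeasurableSet (Eset ∩ Box) := hEm.inter hBoxm
  have hWsym : ∀ τ : Equiv.Perm (Fin (m+1)), ∀ x : Fin (m+1) → ℝ,
      x ∘ τ ∈ Eset ∩ Box ↔ x ∈ Eset ∩ Box := by
    intro τ x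
    have hBsym : x ∘ τ ∈ Box ↔ x ∈ Box := by
      simp only [hBoxdef, Set.mem_pi, Set.mem_univ, true_implies, Function.comp_apply]
      constructor
      · intro h i
        have := h (τ.symm i)
        rwa [Equiv.apply_symm_apply] at this
      · intro h i
        exact h (τ i)
    rw [Set.mem_inter_iff, Set.mem_inter_iff, hBsym, E_symm (m+1) r hr.le τ x]
  have hdecomp := vol_symmetric_decomp (Eset ∩ Box) hWm hWsym
  -- drop the null hyperplane x 0 = 0
  have hvol2 : volume (Eset ∩ Box ∩ {x : Fin (m+1) → ℝ | StrictMono x})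
      = volume (Eset ∩ Box ∩ {x : Fin (m+1) → ℝ | StrictMono x}
          ∩ {x : Fin (m+1) → ℝ | 0 < x 0}) := by
    apply le_antisymm
    · have hsub : Eset ∩ Box ∩ {x : Fin (m+1) → ℝ | StrictMono x}
          ⊆ (Eset ∩ Box ∩ {x : Fin (m+1) → ℝ | StrictMono x}
              ∩ {x : Fin (m+1) → ℝ | 0 < x 0}) ∪ {x : Fin (m+1) → ℝ | x 0 = 0} := by
        rintro x ⟨⟨hxE, hxB⟩, hxSM⟩
        have h0 : 0 ≤ x 0 := by
          have := hxB
          rw [hBoxdef, Set.mem_pi] at this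
          exact (this 0 (Set.mem_univ 0)).1
        rcases eq_or_lt_of_le h0 with h | h
        · right; exact h.symm
        · left; exact ⟨⟨⟨hxE, hxB⟩, hxSM⟩, h⟩
      calc volume (Eset ∩ Box ∩ {x : Fin (m+1) → ℝ | StrictMono x})
          ≤ volume ((Eset ∩ Box ∩ {x : Fin (m+1) → ℝ | StrictMono x}
              ∩ {x : Fin (m+1) → ℝ | 0 < x 0}) ∪ {x : Fin (m+1) → ℝ | x 0 = 0}) :=
            measure_mono hsub
        _ ≤ volume (Eset ∩ Box ∩ {x : Fin (m+1) → ℝ | StrictMono x}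
              ∩ {x : Fin (m+1) → ℝ | 0 < x 0}) + volume {x : Fin (m+1) → ℝ | x 0 = 0} :=
            measure_union_le _ _
        _ = volume (Eset ∩ Box ∩ {x : Fin (m+1) → ℝ | StrictMono x}
              ∩ {x : Fin (m+1) → ℝ | 0 < x 0}) := by
            rw [volume_eq_zero_eqZero (m+1) 0, add_zero]
    · exact measure_mono Set.inter_subset_left
  have himage : Eset ∩ Box ∩ {x : Fin (m+1) → ℝ | StrictMono x}
      ∩ {x : Fin (m+1) → ℝ | 0 < x 0}
      = (psumMap (m+1)) '' {g : Fin (m+1) → ℝ | (∀ i, 0 < g i ∧ g i ≤ r) ∧ ∑ i, g i ≤ L} := by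
    rw [hEdef, hBoxdef]
    exact (E_eq_chamber m L r hr).trans (chamber_eq_image m L r)
  have hvol3 : volume (Eset ∩ Box)
      = ((m+1).factorial : ENNReal)
        * volume {g : Fin (m+1) → ℝ | (∀ i, 0 < g i ∧ g i ≤ r) ∧ ∑ i, g i ≤ L} := by
    rw [hdecomp, hvol2, himage, volume_image_psumMap]
  rw [hvol3]
  rw [ENNReal.toReal_mul, ENNReal.toReal_mul, ENNReal.toReal_pow, ENNReal.toReal_inv,
    ENNReal.toReal_ofReal hL.le, ENNReal.toReal_natCast, volume_gapBox (m+1) L r hL hr]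
  rw [Finset.mul_sum, Finset.mul_sum]
  have hLne : L ≠ 0 := ne_of_gt hL
  have hfacne : (((m+1).factorial : ℝ)) ≠ 0 := Nat.cast_ne_zero.2 (Nat.factorial_ne_zero _)
  have hss : Finset.range (min (m+1) ⌊L / r⌋₊ + 1) ⊆ Finset.range (m+1+1) := by
    intro k hk
    simp only [Finset.mem_range] at *
    omega
  calc ∑ k ∈ Finset.range (m+1+1), L⁻¹ ^ (m+1) * (((m+1).factorial : ℝ) *
        (((m+1).choose k : ℝ) * ((-1:ℝ)^k *
          (if (k:ℝ) * r ≤ L then (L - k*r)^(m+1) / (m+1).factorial else 0))))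
      = ∑ k ∈ Finset.range (m+1+1), (if (k:ℝ) * r ≤ L then
          (-1:ℝ)^k * ((m+1).choose k : ℝ) * (1 - (k:ℝ) * r / L) ^ (m+1) else 0) := by
        refine Finset.sum_congr rfl fun k _ => ?_
        by_cases hc : (k:ℝ) * r ≤ L
        · rw [if_pos hc, if_pos hc]
          have h1 : (1 - (k:ℝ) * r / L) = (L - k*r) * L⁻¹ := by
            field_simp
          rw [h1, mul_pow]
          field_simp
        · rw [if_neg hc, if_neg hc]
          ring
    _ = ∑ k ∈ Finset.range (min (m+1) ⌊L / r⌋₊ + 1), (if (k:ℝ) * r ≤ L then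
          (-1:ℝ)^k * ((m+1).choose k : ℝ) * (1 - (k:ℝ) * r / L) ^ (m+1) else 0) := by
        refine (Finset.sum_subset hss ?_).symm
        intro k hk hk2
        simp only [Finset.mem_range] at hk hk2
        have hkfl : ¬ ((k:ℝ) * r ≤ L) := by
          intro hc
          have h1 : (k:ℝ) ≤ L / r := (le_div_iff₀ hr).mpr hc
          have h2 : k ≤ ⌊L / r⌋₊ := Nat.le_floor h1
          omega
        rw [if_neg hkfl]
    _ = ∑ k ∈ Finset.range (min (m+1) ⌊L / r⌋₊ + 1),
          (-1:ℝ)^k * ((m+1).choose k : ℝ) * (1 - (k:ℝ) * r / L) ^ (m+1) := by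
        refine Finset.sum_congr rfl fun k hk => ?_
        simp only [Finset.mem_range] at hk
        have hk2 : k ≤ ⌊L / r⌋₊ := by omega
        have h1 : (k:ℝ) ≤ L / r :=
          le_trans (Nat.cast_le.mpr hk2) (Nat.floor_le (div_nonneg hL.le hr.le))
        rw [if_pos ((le_div_iff₀ hr).mp h1)]
end
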